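/- arXiv:2512.22510 — 12 statements merged into one kernel-verified Lean document; each statement's English description precedes it below -/
import Mathlib

section
/- Let f be a nonzero real polynomial and let ω > 0. Then there exists a real number ℓ such that the Chiellini identity g_f′·f − g_f·f′ + ℓ(ℓ+1)·f³ = 0 holds (as an identity of polynomials) if and only if there exists a real number k ≠ 0 with f = k·X. (In other words, the isochronicity condition g(x) = ω²x + I(x)²/x³ is compatible with the Chiellini condition for a real parameter ℓ if and only if f(x) = kx, in which case the system is the modified Emden equation.) -/
open Polynomial

lemma antideriv_unique (p q : ℝ[X]) (h : derivative p = derivative q)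
    (h0 : p.eval 0 = q.eval 0) : p = q := by
  have hd : derivative (p - q) = 0 := by rw [derivative_sub, h, sub_self]
  have hc := eq_C_of_derivative_eq_zero hd
  have h2 : (p - q).coeff 0 = 0 := by
    rw [coeff_zero_eq_eval_zero, eval_sub, h0, sub_self]
  rw [h2, map_zero] at hc
  exact sub_eq_zero.mp hc


lemma coeff_term (a : ℝ) (E i N : ℕ) (t : ℝ[X]) (h : N = i + E) :
    (C a * (X ^ E * t)).coeff N = a * t.coeff i := by
  subst h; rw [coeff_C_mul, coeff_X_pow_mul]

lemma coeff_term_one (a : ℝ) (E : ℕ) :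
    (C a * (X ^ E * (1:ℝ[X]))).coeff E = a := by
  rw [mul_one, coeff_C_mul, coeff_X_pow, if_pos rfl, mul_one]

lemma coeff_term_zero (a : ℝ) (E N d : ℕ) (t : ℝ[X]) (ht : t.natDegree ≤ d)
    (h : E + d < N) : (C a * (X ^ E * t)).coeff N = 0 := by
  apply coeff_eq_zero_of_natDegree_lt
  calc (C a * (X ^ E * t)).natDegree ≤ (X ^ E * t).natDegree := natDegree_C_mul_le _ _
    _ ≤ (X ^ E : ℝ[X]).natDegree + t.natDegree := natDegree_mul_le
    _ ≤ E + d := by rw [natDegree_X_pow]; omega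
    _ < N := h

lemma coeff_term_ne (a : ℝ) (E N : ℕ) (h : N ≠ E) :
    (C a * (X ^ E * (1:ℝ[X]))).coeff N = 0 := by
  rw [mul_one, coeff_C_mul, coeff_X_pow, if_neg h, mul_zero]

lemma case2_contra (n r : ℕ) (e c pr qr : ℝ) (he : e ≠ 0) (hpr : pr ≠ 0) (hrn : r ≤ n)
    (hq : ((r:ℝ)+3) * qr = pr)
    (hA : ((n:ℝ)+4)*e*((n:ℝ)+1)*e^2 - 2*e*(((n:ℝ)+4)*e)^2 + 4*(((n:ℝ)+4)*e)*e^2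
        - c*(((n:ℝ)+4)*e)^3 = 0)
    (hB : e^2*((r:ℝ)*pr) + (2*((n:ℝ)+1)*(((n:ℝ)+4)*e)*e - 2*(((n:ℝ)+4)*e)^2
        + 8*(((n:ℝ)+4)*e)*e)*qr
        + (-(4*(((n:ℝ)+4)*e)*e) + 4*e^2 - 3*c*(((n:ℝ)+4)*e)^2)*pr = 0) : False := by
  have hrn' : (r:ℝ) ≤ (n:ℝ) := Nat.cast_le.mpr hrn
  have hkey : pr * (e^3 * (((n:ℝ)+4) * (((r:ℝ)+1) * ((n:ℝ)+1-(r:ℝ))))) = 0 := by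
    linear_combination (-((((r:ℝ))+3) * (((n:ℝ)+4)*e))) * hB + (3*pr*((r:ℝ)+3)) * hA
      + (2*((n:ℝ)+4)^2*e^3) * hq
  have h1 : (0:ℝ) < ((n:ℝ)+4) * (((r:ℝ)+1) * ((n:ℝ)+1-(r:ℝ))) := by
    have : (0:ℝ) < (n:ℝ)+1-(r:ℝ) := by linarith
    positivity
  have h2 : e^3 ≠ 0 := pow_ne_zero _ he
  rcases mul_eq_zero.mp hkey with h | h
  · exact hpr h
  · rcases mul_eq_zero.mp h with h | h
    · exact h2 h
    · exact absurd h (ne_of_gt h1)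


/-- For a nonzero real polynomial `f` and `ω > 0`, with `I` the unique
polynomial satisfying `I(0) = 0` and `I' = X·f` (so `I(x) = ∫₀ˣ x' f(x') dx'`), and `g`
the unique polynomial with `X³·g = ω²·X⁴ + I²` (the isochronicity condition
`g(x) = ω²x + I(x)²/x³`), there exists a real `ℓ` such that the Chiellini identity
`g'·f − g·f' + ℓ(ℓ+1)·f³ = 0` holds iff `f = k·X` for some real `k ≠ 0`. -/
theorem stmt_0 (f : ℝ[X]) (hf : f ≠ 0) (ω : ℝ) (hω : 0 < ω)
    (I g : ℝ[X]) (hI0 : I.eval 0 = 0) (hI' : derivative I = X * f)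
    (hg : X ^ 3 * g = C (ω ^ 2) * X ^ 4 + I ^ 2) :
    (∃ ℓ : ℝ,
        derivative g * f - g * derivative f + C (ℓ * (ℓ + 1)) * f ^ 3 = 0) ↔
      ∃ k : ℝ, k ≠ 0 ∧ f = C k * X := by
  constructor
  · rintro ⟨ℓ, hch⟩
    by_cases hf0 : f.coeff 0 = 0
    · obtain ⟨f₁, hXf⟩ : ∃ f₁, f = X * f₁ := X_dvd_iff.mpr hf0
      set c : ℝ := ℓ * (ℓ + 1) with hcdef
      have hf₁0 : f₁ ≠ 0 := by rintro rfl; simp at hXf; exact hf hXf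
      set d := f₁.natDegree with hd
      set K : ℝ[X] := ∑ i ∈ Finset.range (d+1), C (f₁.coeff i / ((i:ℝ)+3)) * X^i with hKdef
      have hKco : ∀ i : ℕ, K.coeff i = f₁.coeff i / ((i:ℝ)+3) := by
        intro i
        rw [hKdef, finset_sum_coeff]
        simp only [coeff_C_mul, coeff_X_pow, mul_ite, mul_one, mul_zero]
        rw [Finset.sum_ite_eq (Finset.range (d+1)) i (fun j => f₁.coeff j / ((j:ℝ)+3))]
        by_cases hi : i ∈ Finset.range (d+1)
        · rw [if_pos hi]
        · rw [if_neg hi]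
          rw [coeff_eq_zero_of_natDegree_lt (by simp at hi; omega), zero_div]
      have hK : C 3 * K + X * derivative K = f₁ := by
        apply Polynomial.ext
        intro i
        cases i with
        | zero =>
          have : (X * derivative K).coeff 0 = 0 := by
            rw [mul_coeff_zero, coeff_X_zero, zero_mul]
          rw [coeff_add, this, coeff_C_mul, hKco]
          push_cast
          field_simp
          ring
        | succ i =>
          rw [coeff_add, coeff_C_mul, coeff_X_mul, coeff_derivative, hKco]
          have h1 : ((i:ℝ)+1) + 3 ≠ 0 := by positivity
          push_cast
          field_simp
          ring
      have h3C : (C (3:ℝ) : ℝ[X]) = 3 := map_ofNat C 3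
      have hK3 : (3:ℝ[X]) * K + X * derivative K = f₁ := by rw [← h3C]; exact hK
      have hI3 : I = X^3 * K := by
        apply antideriv_unique
        · rw [hI', hXf, derivative_mul, derivative_X_pow]
          push_cast
          rw [h3C]
          linear_combination (-(X:ℝ[X])^2) * hK3
        · simp [hI0]
      have hgK : g = C (ω^2) * X + X^3 * K^2 := by
        apply mul_left_cancel₀ (pow_ne_zero 3 (X_ne_zero (R := ℝ)))
        rw [hg, hI3]; ring
      rw [hgK, hXf] at hch
      simp only [derivative_add, derivative_mul, derivative_C, derivative_X,
        derivative_X_pow, derivative_pow, derivative_one] at hch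
      push_cast at hch
      rw [map_ofNat (C : ℝ →+* ℝ[X]) 2, h3C] at hch
      have hT0 : derivative f₁ * (C (ω^2) + X^2*K^2) - 2 * (X*(K*f₁^2))
          + 4 * (X*(f₁*K^2)) - C c * (X*f₁^3) = 0 := by
        apply mul_left_cancel₀ (pow_ne_zero 2 (X_ne_zero (R := ℝ)))
        rw [mul_zero]
        linear_combination (2*(X:ℝ[X])^3*K*f₁) * hK3 - hch
      by_cases hd0 : f₁.natDegree = 0
      · obtain ⟨a, ha⟩ := natDegree_eq_zero.mp hd0
        refine ⟨a, ?_, ?_⟩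
        · rintro rfl; rw [map_zero] at ha; exact hf₁0 ha.symm
        · rw [hXf, ← ha]; ring
      · exfalso
        set n := d - 1 with hn
        have hdn : d = n + 1 := by omega
        set b := f₁.leadingCoeff with hb
        have hbne : b ≠ 0 := leadingCoeff_ne_zero.mpr hf₁0
        set e := b / ((n:ℝ)+4) with he
        have hn4 : ((n:ℝ)+4) ≠ 0 := by positivity
        have hene : e ≠ 0 := div_ne_zero hbne hn4
        have hbe : b = ((n:ℝ)+4) * e := by rw [he]; field_simp
        set p := f₁ - C b * X^(n+1) with hp
        set q := K - C e * X^(n+1) with hq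
        have hpco : ∀ i, n+1 ≤ i → p.coeff i = 0 := by
          intro i hi
          rw [hp, coeff_sub, coeff_C_mul, coeff_X_pow]
          by_cases hii : i = n+1
          · subst hii
            rw [if_pos rfl, mul_one, show n+1 = f₁.natDegree by omega, coeff_natDegree, ← hb,
              sub_self]
          · rw [if_neg hii, mul_zero,
              coeff_eq_zero_of_natDegree_lt (show f₁.natDegree < i by omega), sub_zero]
        have hqco : ∀ i : ℕ, q.coeff i = p.coeff i / ((i:ℝ)+3) := by
          intro i
          rw [hq, coeff_sub, coeff_C_mul, coeff_X_pow, hKco, hp, coeff_sub, coeff_C_mul,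
            coeff_X_pow]
          by_cases hii : i = n+1
          · subst hii
            rw [if_pos rfl, mul_one, mul_one, hbe]
            push_cast
            rw [show ((n:ℝ)+1)+3 = (n:ℝ)+4 by ring, sub_div]
            congr 1
            exact (mul_div_cancel_left₀ e hn4).symm
          · rw [if_neg hii, mul_zero, mul_zero, sub_zero, sub_zero]
        have hf1eq : f₁ = C b * X^(n+1) + p := by rw [hp]; ring
        have hKeq : K = C e * X^(n+1) + q := by rw [hq]; ring
        have hdf1 : derivative f₁ = C (b*((n:ℝ)+1)) * X^n + derivative p := by
          nth_rewrite 1 [hf1eq]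
          rw [derivative_add, derivative_C_mul_X_pow, Nat.add_sub_cancel]
          push_cast
          ring
        have hDco : ∀ i : ℕ, (X * derivative p).coeff i = (i:ℝ) * p.coeff i := by
          intro i
          cases i with
          | zero => rw [mul_coeff_zero, coeff_X_zero, zero_mul]; push_cast; ring
          | succ i => rw [coeff_X_mul, coeff_derivative]; push_cast; ring
        have hpn : p.natDegree ≤ n := natDegree_le_iff_coeff_eq_zero.mpr
          (fun N hN => hpco N (by omega))
        have hqn : q.natDegree ≤ n := natDegree_le_iff_coeff_eq_zero.mpr
          (fun N hN => by rw [hqco, hpco N (by omega), zero_div])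
        have hdpn : (derivative p).natDegree ≤ n :=
          le_trans (natDegree_derivative_le p) (by omega)
        have hDn : (X * derivative p).natDegree ≤ n := natDegree_le_iff_coeff_eq_zero.mpr
          (fun N hN => by rw [hDco, hpco N (by omega), mul_zero])
        rw [hdf1, hf1eq, hKeq] at hT0
        have hE : C (b*((n:ℝ)+1)*ω^2) * (X^n * 1)
            + C (b*((n:ℝ)+1)*e^2 - 2*e*b^2 + 4*b*e^2 - c*b^3) * (X^(3*n+4) * 1)
            + C (ω^2) * (X^0 * derivative p)
            + C (e^2) * (X^(2*n+3) * (X * derivative p))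
            + C (2*((n:ℝ)+1)*b*e - 2*b^2 + 8*b*e) * (X^(2*n+3) * q)
            + C (-(4*b*e) + 4*e^2 - 3*c*b^2) * (X^(2*n+3) * p)
            + C (2*e) * (X^(n+2) * ((X * derivative p) * q))
            + C (((n:ℝ)+1)*b + 4*b) * (X^(n+2) * (q*q))
            + C (-(2*e) - 3*c*b) * (X^(n+2) * (p*p))
            + C (-(4*b) + 8*e) * (X^(n+2) * (p*q))
            + C 1 * (X^1 * ((X * derivative p) * (q*q)))
            + C (-2) * (X^1 * (p*(p*q)))
            + C 4 * (X^1 * (p*(q*q)))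
            + C (-c) * (X^1 * (p*(p*p))) = 0 := by
          linear_combination (norm := (simp only [map_mul, map_add, map_sub, map_neg,
            map_pow, map_ofNat, C_eq_natCast, C_1]; ring1)) hT0
        by_cases hp0 : p = 0
        · have hq0 : q = 0 := Polynomial.ext (fun i => by rw [hqco i, hp0]; simp)
          rw [hp0, hq0] at hE
          simp only [derivative_zero, mul_zero, zero_mul, add_zero] at hE
          have h := congrArg (fun P : ℝ[X] => P.coeff n) hE
          simp only [coeff_add, coeff_zero] at h
          rw [coeff_term_one (b*((n:ℝ)+1)*ω^2) n,
            coeff_term_ne (b*((n:ℝ)+1)*e^2 - 2*e*b^2 + 4*b*e^2 - c*b^3) (3*n+4) n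
              (by omega)] at h
          have h' : b*((n:ℝ)+1)*ω^2 = 0 := by linear_combination h
          exact (mul_ne_zero (mul_ne_zero hbne (by positivity)) (by positivity)) h' 
        · set r := p.natDegree with hr
          have hpr : p.coeff r ≠ 0 := by
            rw [hr]; exact leadingCoeff_ne_zero.mpr hp0
          have hrn : r ≤ n := hpn
          -- extraction A at degree 3n+4
          have hA := congrArg (fun P : ℝ[X] => P.coeff (3*n+4)) hE
          simp only [coeff_add, coeff_zero] at hA
          rw [coeff_term_zero (b*((n:ℝ)+1)*ω^2) n (3*n+4) 0 1 natDegree_one.le (by omega),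
            coeff_term_one (b*((n:ℝ)+1)*e^2 - 2*e*b^2 + 4*b*e^2 - c*b^3) (3*n+4),
            coeff_term_zero (ω^2) 0 (3*n+4) n (derivative p) hdpn (by omega),
            coeff_term_zero (e^2) (2*n+3) (3*n+4) n (X * derivative p) hDn (by omega),
            coeff_term_zero (2*((n:ℝ)+1)*b*e - 2*b^2 + 8*b*e) (2*n+3) (3*n+4) n q hqn
              (by omega),
            coeff_term_zero (-(4*b*e) + 4*e^2 - 3*c*b^2) (2*n+3) (3*n+4) n p hpn (by omega),
            coeff_term_zero (2*e) (n+2) (3*n+4) (n+n) ((X * derivative p) * q)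
              (le_trans natDegree_mul_le (add_le_add hDn hqn)) (by omega),
            coeff_term_zero (((n:ℝ)+1)*b + 4*b) (n+2) (3*n+4) (n+n) (q*q)
              (le_trans natDegree_mul_le (add_le_add hqn hqn)) (by omega),
            coeff_term_zero (-(2*e) - 3*c*b) (n+2) (3*n+4) (n+n) (p*p)
              (le_trans natDegree_mul_le (add_le_add hpn hpn)) (by omega),
            coeff_term_zero (-(4*b) + 8*e) (n+2) (3*n+4) (n+n) (p*q)
              (le_trans natDegree_mul_le (add_le_add hpn hqn)) (by omega),
            coeff_term_zero 1 1 (3*n+4) (n+(n+n)) ((X * derivative p) * (q*q))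
              (le_trans natDegree_mul_le (add_le_add hDn
                (le_trans natDegree_mul_le (add_le_add hqn hqn)))) (by omega),
            coeff_term_zero (-2) 1 (3*n+4) (n+(n+n)) (p*(p*q))
              (le_trans natDegree_mul_le (add_le_add hpn
                (le_trans natDegree_mul_le (add_le_add hpn hqn)))) (by omega),
            coeff_term_zero 4 1 (3*n+4) (n+(n+n)) (p*(q*q))
              (le_trans natDegree_mul_le (add_le_add hpn
                (le_trans natDegree_mul_le (add_le_add hqn hqn)))) (by omega),
            coeff_term_zero (-c) 1 (3*n+4) (n+(n+n)) (p*(p*p))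
              (le_trans natDegree_mul_le (add_le_add hpn
                (le_trans natDegree_mul_le (add_le_add hpn hpn)))) (by omega)] at hA
          have hpn' : p.natDegree ≤ r := le_of_eq hr.symm
          have hqn' : q.natDegree ≤ r := natDegree_le_iff_coeff_eq_zero.mpr
            (fun N hN => by rw [hqco, coeff_eq_zero_of_natDegree_lt (by omega), zero_div])
          have hDr : (X * derivative p).natDegree ≤ r := natDegree_le_iff_coeff_eq_zero.mpr
            (fun N hN => by rw [hDco, coeff_eq_zero_of_natDegree_lt (by omega), mul_zero])
          -- extraction B at degree 2n+3+r
          have hB := congrArg (fun P : ℝ[X] => P.coeff (2*n+3+r)) hE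
          simp only [coeff_add, coeff_zero] at hB
          rw [coeff_term_zero (b*((n:ℝ)+1)*ω^2) n (2*n+3+r) 0 1 natDegree_one.le (by omega),
            coeff_term_ne (b*((n:ℝ)+1)*e^2 - 2*e*b^2 + 4*b*e^2 - c*b^3) (3*n+4) (2*n+3+r)
              (by omega),
            coeff_term_zero (ω^2) 0 (2*n+3+r) n (derivative p) hdpn (by omega),
            coeff_term (e^2) (2*n+3) r (2*n+3+r) (X * derivative p) (by omega),
            coeff_term (2*((n:ℝ)+1)*b*e - 2*b^2 + 8*b*e) (2*n+3) r (2*n+3+r) q (by omega),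
            coeff_term (-(4*b*e) + 4*e^2 - 3*c*b^2) (2*n+3) r (2*n+3+r) p (by omega),
            coeff_term_zero (2*e) (n+2) (2*n+3+r) (r+r) ((X * derivative p) * q)
              (le_trans natDegree_mul_le (add_le_add hDr hqn')) (by omega),
            coeff_term_zero (((n:ℝ)+1)*b + 4*b) (n+2) (2*n+3+r) (r+r) (q*q)
              (le_trans natDegree_mul_le (add_le_add hqn' hqn')) (by omega),
            coeff_term_zero (-(2*e) - 3*c*b) (n+2) (2*n+3+r) (r+r) (p*p)
              (le_trans natDegree_mul_le (add_le_add hpn' hpn')) (by omega),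
            coeff_term_zero (-(4*b) + 8*e) (n+2) (2*n+3+r) (r+r) (p*q)
              (le_trans natDegree_mul_le (add_le_add hpn' hqn')) (by omega),
            coeff_term_zero 1 1 (2*n+3+r) (r+(r+r)) ((X * derivative p) * (q*q))
              (le_trans natDegree_mul_le (add_le_add hDr
                (le_trans natDegree_mul_le (add_le_add hqn' hqn')))) (by omega),
            coeff_term_zero (-2) 1 (2*n+3+r) (r+(r+r)) (p*(p*q))
              (le_trans natDegree_mul_le (add_le_add hpn'
                (le_trans natDegree_mul_le (add_le_add hpn' hqn')))) (by omega),
            coeff_term_zero 4 1 (2*n+3+r) (r+(r+r)) (p*(q*q))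
              (le_trans natDegree_mul_le (add_le_add hpn'
                (le_trans natDegree_mul_le (add_le_add hqn' hqn')))) (by omega),
            coeff_term_zero (-c) 1 (2*n+3+r) (r+(r+r)) (p*(p*p))
              (le_trans natDegree_mul_le (add_le_add hpn'
                (le_trans natDegree_mul_le (add_le_add hpn' hpn')))) (by omega)] at hB
          rw [hDco r] at hB
          have hqrel : ((r:ℝ)+3) * q.coeff r = p.coeff r := by
            rw [hqco r]
            have : ((r:ℝ))+3 ≠ 0 := by positivity
            field_simp
          rw [hbe] at hA hB
          exact case2_contra n r e c (p.coeff r) (q.coeff r) hene hpr hrn hqrel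
            (by linear_combination hA) (by linear_combination hB)
    · exfalso
      set c : ℝ := ℓ * (ℓ + 1) with hc
      have hc4 : 0 ≤ 1 + 4 * c := by nlinarith [sq_nonneg (2*ℓ+1)]
      have hI0' : I.coeff 0 = 0 := by rwa [coeff_zero_eq_eval_zero]
      have hI1 : I.coeff 1 = 0 := by
        have h := congrArg (fun P => coeff P 0) hI'
        simp only [coeff_derivative] at h
        simpa using h
      have hI2 : I.coeff 2 * 2 = f.coeff 0 := by
        have h := congrArg (fun P => coeff P 1) hI'
        simp only [coeff_derivative] at h
        have hx : (X * f).coeff 1 = f.coeff 0 := by simpa using coeff_X_mul f 0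
        rw [hx] at h
        push_cast at h
        linarith [h]
      have hg0 : g.coeff 0 = 0 := by
        have h := congrArg (fun P => coeff P 3) hg
        rw [show ((X:ℝ[X]) ^ 3 * g).coeff 3 = g.coeff 0 from coeff_X_pow_mul g 3 0] at h
        rw [coeff_add, coeff_C_mul, coeff_X_pow] at h
        rw [show (I:ℝ[X])^2 = I * I from pow_two I, coeff_mul, Finset.Nat.sum_antidiagonal_eq_sum_range_succ_mk] at h
        simp [Finset.sum_range_succ, hI0', hI1] at h
        exact h
      have hg1 : g.coeff 1 = ω ^ 2 + I.coeff 2 ^ 2 := by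
        have h := congrArg (fun P => coeff P 4) hg
        rw [show ((X:ℝ[X]) ^ 3 * g).coeff 4 = g.coeff 1 from coeff_X_pow_mul g 3 1] at h
        rw [coeff_add, coeff_C_mul, coeff_X_pow] at h
        rw [show (I:ℝ[X])^2 = I * I from pow_two I, coeff_mul, Finset.Nat.sum_antidiagonal_eq_sum_range_succ_mk] at h
        simp [Finset.sum_range_succ, hI0', hI1] at h
        rw [h]; ring
      have heval := congrArg (fun P => eval 0 P) hch
      simp only [eval_add, eval_sub, eval_mul, eval_pow, eval_C, eval_zero] at heval
      rw [show eval 0 g = g.coeff 0 from (coeff_zero_eq_eval_zero g).symm,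
        show eval 0 f = f.coeff 0 from (coeff_zero_eq_eval_zero f).symm,
        show eval 0 (derivative g) = (derivative g).coeff 0 from
          (coeff_zero_eq_eval_zero _).symm, coeff_derivative, hg0, hg1] at heval
      push_cast at heval
      -- heval : (ω^2 + I.coeff 2^2) * 1 * f.coeff 0 - 0 * _ + c * f.coeff 0 ^3 = 0
      set i2 := I.coeff 2
      have hi2 : i2 ≠ 0 := by
        intro h0
        rw [h0] at hI2
        simp at hI2
        exact hf0 hI2.symm
      have hi2sq : 0 < i2 ^ 2 := by positivity
      have key : 2 * i2 ^ 2 * ω ^ 2 + 2 * (1 + 4 * c) * i2 ^ 4 = 0 := by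
        have hfc : f.coeff 0 = 2 * i2 := by linarith [hI2]
        rw [hfc] at heval
        linear_combination i2 * heval
      nlinarith [mul_pos hi2sq (mul_pos hω hω), mul_nonneg hc4 (pow_nonneg (sq_nonneg i2) 2)]
  · rintro ⟨k, hk, rfl⟩
    refine ⟨-1/3, ?_⟩
    have h3 : (C (3:ℝ) : ℝ[X]) = 3 := map_ofNat C 3
    have hI3 : (3:ℝ[X]) * I = C k * X ^ 3 := by
      apply antideriv_unique
      · rw [show (3:ℝ[X]) * I = C (3:ℝ) * I by rw [h3], derivative_C_mul, hI',
          derivative_C_mul_X_pow]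
        push_cast
        rw [C_mul, h3]
        norm_num
        ring
      · simp [hI0]
    have hg9 : (9:ℝ[X]) * g = 9 * C (ω^2) * X + (C k)^2 * X^3 := by
      apply mul_left_cancel₀ (pow_ne_zero 3 (X_ne_zero (R := ℝ)))
      linear_combination (9:ℝ[X]) * hg + ((3:ℝ[X]) * I + C k * X^3) * hI3
    have hdg : (9:ℝ[X]) * derivative g = 9 * C (ω^2) + 3 * (C k)^2 * X^2 := by
      have h := congrArg derivative hg9
      simp only [derivative_mul, derivative_add, derivative_C, derivative_X,
        derivative_X_pow, derivative_pow, derivative_one, derivative_ofNat] at h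
      push_cast at h
      rw [h3, map_ofNat C 2] at h
      norm_num at h
      rw [← C_pow] at h
      linear_combination h
    have hdf : derivative (C k * X) = C k := by simp
    have hC : (81:ℝ[X]) * C ((-1/3 : ℝ) * (-1/3 + 1)) = -18 := by
      rw [show ((81:ℝ[X])) = C (81:ℝ) from (map_ofNat C 81).symm, ← C_mul]
      norm_num
      exact map_ofNat C 18
    apply mul_left_cancel₀ (show (81:ℝ[X]) ≠ 0 by norm_num)
    rw [mul_zero, hdf]
    linear_combination (9 * C k * X) * hdg - (9 * C k) * hg9 + ((C k)^3 * X^3) * hC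
end

section
/- Let f be a real polynomial of degree at least 2 and let ω > 0. Then for every real number c, the Chiellini identity fails: g_f′·f − g_f·f′ + c·f³ ≠ 0 as polynomials. -/
open Polynomial
open scoped Classical

private lemma conj_eval (P : ℝ[X]) (z : ℂ) :
    (P.map (algebraMap ℝ ℂ)).eval ((starRingEnd ℂ) z)
      = (starRingEnd ℂ) ((P.map (algebraMap ℝ ℂ)).eval z) := by
  rw [eval_map, eval_map, hom_eval₂]
  congr 1
  ext r
  simp

private lemma wronskian_mult {F G : ℂ[X]} (hF : F ≠ 0) (hG : G ≠ 0) {c : ℂ} (hc : c ≠ 0)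
    (hW : derivative G * F - G * derivative F = C c * F ^ 3) (r : ℂ) :
    rootMultiplicity r F ≤ rootMultiplicity r G := by
  by_contra hlt
  push_neg at hlt
  obtain ⟨k, hk⟩ : ∃ k, rootMultiplicity r F = k := ⟨_, rfl⟩
  obtain ⟨j, hj⟩ : ∃ j, rootMultiplicity r G = j := ⟨_, rfl⟩
  rw [hk, hj] at hlt
  have hk1 : 1 ≤ k := by omega
  have hW0 : C c * F ^ 3 ≠ 0 := mul_ne_zero (by simpa using hc) (pow_ne_zero _ hF)
  have hFfac : (X - C r) ^ k * (F /ₘ (X - C r) ^ k) = F := by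
    rw [← hk]; exact pow_mul_divByMonic_rootMultiplicity_eq F r
  set Fr := F /ₘ (X - C r) ^ k with hFrdef
  have hFr0 : Fr.eval r ≠ 0 := by
    rw [hFrdef, ← hk]; exact eval_divByMonic_pow_rootMultiplicity_ne_zero r hF
  have hFroot : F.IsRoot r := (rootMultiplicity_pos hF).mp (by omega)
  have hmultW : rootMultiplicity r (C c * F ^ 3) = 3 * k := by
    have h3 : C c * F ^ 3 = (X - C r) ^ (3 * k) * (C c * Fr ^ 3) := by
      rw [← hFfac]; ring
    rw [h3, rootMultiplicity_mul (by rw [← h3]; exact hW0),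
      rootMultiplicity_X_sub_C_pow,
      rootMultiplicity_eq_zero (by simp [IsRoot, hFr0, hc])]
    omega
  rcases Nat.eq_zero_or_pos j with hj0 | hjpos
  · -- G(r) ≠ 0
    have hdF : derivative F ≠ 0 := by
      intro h
      have h0 : F.natDegree = 0 := natDegree_eq_zero_of_derivative_eq_zero h
      obtain ⟨a, rfl⟩ := natDegree_eq_zero.mp h0
      simp only [IsRoot, eval_C] at hFroot
      simp [hFroot] at hF
    have hGF' : G * derivative F ≠ 0 := mul_ne_zero hG hdF
    have hdvd1 : (X - C r) ^ k ∣ derivative G * F := by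
      refine Dvd.dvd.mul_left ?_ _
      rw [← hk]; exact pow_rootMultiplicity_dvd F r
    have hdvd2 : (X - C r) ^ k ∣ C c * F ^ 3 := by
      refine Dvd.dvd.mul_left ?_ _
      refine dvd_trans ?_ (dvd_pow_self F (by norm_num : (3:ℕ) ≠ 0))
      rw [← hk]; exact pow_rootMultiplicity_dvd F r
    have hdvd3 : (X - C r) ^ k ∣ G * derivative F := by
      have h4 : G * derivative F = derivative G * F - C c * F ^ 3 := by rw [← hW]; ring
      rw [h4]; exact dvd_sub hdvd1 hdvd2
    have hle : k ≤ rootMultiplicity r (G * derivative F) :=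
      (le_rootMultiplicity_iff hGF').mpr hdvd3
    rw [rootMultiplicity_mul hGF', derivative_rootMultiplicity_of_root hFroot, hj, hk] at hle
    omega
  · -- 1 ≤ j < k
    have hGfac : (X - C r) ^ j * (G /ₘ (X - C r) ^ j) = G := by
      rw [← hj]; exact pow_mul_divByMonic_rootMultiplicity_eq G r
    set Gr := G /ₘ (X - C r) ^ j with hGrdef
    have hGr0 : Gr.eval r ≠ 0 := by
      rw [hGrdef, ← hj]; exact eval_divByMonic_pow_rootMultiplicity_ne_zero r hG
    obtain ⟨k', rfl⟩ : ∃ k', k = k' + 1 := ⟨k - 1, by omega⟩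
    obtain ⟨j', rfl⟩ : ∃ j', j = j' + 1 := ⟨j - 1, by omega⟩
    set B : ℂ[X] := (C ((j' : ℂ) + 1) - C ((k' : ℂ) + 1)) * Gr * Fr
        + (X - C r) * (derivative Gr * Fr - Gr * derivative Fr) with hBdef
    have key : C c * F ^ 3 = (X - C r) ^ (j' + k' + 1) * B := by
      rw [← hW, ← hFfac, ← hGfac, hBdef]
      rw [derivative_mul, derivative_mul, derivative_pow, derivative_pow,
        derivative_X_sub_C]
      simp only [Nat.add_sub_cancel]
      push_cast
      ring
    have hBr0 : B.eval r ≠ 0 := by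
      have hBr : B.eval r = ((j' : ℂ) - k') * Gr.eval r * Fr.eval r := by
        simp [hBdef]
      rw [hBr]
      have hne : (j' : ℂ) - k' ≠ 0 := by
        rw [sub_ne_zero]
        exact fun h => (by omega : j' ≠ k') (by exact_mod_cast h)
      exact mul_ne_zero (mul_ne_zero hne hGr0) hFr0
    have hmult2 : rootMultiplicity r (C c * F ^ 3) = j' + k' + 1 := by
      rw [key, rootMultiplicity_mul (by rw [← key]; exact hW0),
        rootMultiplicity_X_sub_C_pow,
        rootMultiplicity_eq_zero (by simp [IsRoot, hBr0])]
    omega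

private lemma residue_sum {p K : ℂ[X]} (hp : p ≠ 0)
    (hcard : Multiset.card p.roots = p.natDegree)
    (hnodup : p.roots.Nodup)
    (hd : ∀ r ∈ p.roots, (derivative p).eval r ≠ 0)
    (hK : K.natDegree + 1 ≤ p.natDegree) :
    ∑ r ∈ p.roots.toFinset, K.eval r / (derivative p).eval r
      = K.coeff (p.natDegree - 1) / p.leadingCoeff := by
  set n := p.natDegree with hn
  have hn1 : 1 ≤ n := by
    by_contra h
    push_neg at h
    omega
  set S := p.roots.toFinset with hS
  have hScard : S.card = n := by
    rw [hS, Multiset.toFinset_card_of_nodup hnodup, hcard]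
  have hmemS : ∀ r, r ∈ S ↔ p.IsRoot r := by
    intro r
    rw [hS, Multiset.mem_toFinset, mem_roots hp]
  -- factorization at each root
  have hfac : ∀ r ∈ S, (X - C r) * (p /ₘ (X - C r)) = p := by
    intro r hr
    exact mul_divByMonic_eq_iff_isRoot.mpr ((hmemS r).mp hr)
  have hDdeg : ∀ r ∈ S, (p /ₘ (X - C r)).natDegree = n - 1 := by
    intro r hr
    rw [natDegree_divByMonic p (monic_X_sub_C r), natDegree_X_sub_C]
  have hDlead : ∀ r ∈ S, (p /ₘ (X - C r)).coeff (n - 1) = p.leadingCoeff := by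
    intro r hr
    have h1 : p.leadingCoeff = (p /ₘ (X - C r)).leadingCoeff := by
      conv_lhs => rw [← hfac r hr]
      rw [leadingCoeff_mul, leadingCoeff_X_sub_C, one_mul]
    rw [h1, leadingCoeff, hDdeg r hr]
  have hDeval : ∀ r ∈ S, (p /ₘ (X - C r)).eval r = (derivative p).eval r := by
    intro r hr
    have h1 := hfac r hr
    have h2 : derivative p = (p /ₘ (X - C r)) + (X - C r) * derivative (p /ₘ (X - C r)) := by
      conv_lhs => rw [← h1]
      rw [derivative_mul, derivative_sub, derivative_X, derivative_C]
      ring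
    rw [h2]
    simp
  have hDeval' : ∀ r ∈ S, ∀ s ∈ S, s ≠ r → (p /ₘ (X - C r)).eval s = 0 := by
    intro r hr s hs hsr
    have h1 : p.eval s = (s - r) * (p /ₘ (X - C r)).eval s := by
      conv_lhs => rw [← hfac r hr]
      simp
    have h2 : p.eval s = 0 := (hmemS s).mp hs
    rw [h2] at h1
    have h3 : s - r ≠ 0 := sub_ne_zero.mpr hsr
    field_simp at h1
    exact (mul_eq_zero.mp h1.symm).resolve_left h3
  -- the interpolation polynomial
  set Q : ℂ[X] := ∑ r ∈ S, C (K.eval r / (derivative p).eval r) * (p /ₘ (X - C r)) with hQ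
  have hQeval : ∀ s ∈ S, Q.eval s = K.eval s := by
    intro s hs
    rw [hQ, eval_finset_sum]
    rw [Finset.sum_eq_single_of_mem s hs]
    · rw [eval_mul, eval_C, hDeval s hs]
      have hds := hd s (Multiset.mem_toFinset.mp hs)
      field_simp
    · intro r hr hrs
      rw [eval_mul, hDeval' r hr s hs (Ne.symm hrs), mul_zero]
  have hQdeg : Q.natDegree ≤ n - 1 := by
    refine (natDegree_sum_le _ _).trans ?_
    rw [Finset.fold_max_le]
    constructor
    · omega
    · intro r hr
      refine (natDegree_mul_le).trans ?_
      rw [natDegree_C, hDdeg r hr]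
      omega
  have hKQ : K - Q = 0 := by
    by_contra hne
    have hroots : S.val ≤ (K - Q).roots := by
      rw [Multiset.le_iff_count]
      intro a
      rcases Nat.eq_zero_or_pos (S.val.count a) with h0 | hpos
      · omega
      · have haS : a ∈ S := by
          rw [Finset.mem_def]
          exact Multiset.count_pos.mp hpos
        have h1 : S.val.count a ≤ 1 := Multiset.nodup_iff_count_le_one.mp S.nodup a
        have h2 : (K - Q).IsRoot a := by
          rw [IsRoot, eval_sub, hQeval a haS, sub_self]
        have h3 : 1 ≤ (K - Q).roots.count a := by
          rw [count_roots]
          exact (rootMultiplicity_pos hne).mpr h2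
        omega
    have hcard2 : n ≤ Multiset.card (K - Q).roots := by
      have h5 := Multiset.card_le_card hroots
      have h6 : Multiset.card S.val = n := hScard
      omega
    have hcard3 : Multiset.card (K - Q).roots ≤ (K - Q).natDegree := card_roots' _
    have hdeg : (K - Q).natDegree ≤ n - 1 := by
      refine (natDegree_sub_le _ _).trans ?_
      rw [max_le_iff]
      exact ⟨by omega, hQdeg⟩
    omega
  have hKQ' : K = Q := sub_eq_zero.mp hKQ
  have hQcoeff : Q.coeff (n - 1) = ∑ r ∈ S, (K.eval r / (derivative p).eval r) * p.leadingCoeff := by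
    rw [hQ, finset_sum_coeff]
    refine Finset.sum_congr rfl ?_
    intro r hr
    rw [coeff_C_mul, hDlead r hr]
  have hKcoeff : K.coeff (n - 1) = Q.coeff (n - 1) := by rw [hKQ']
  rw [hKcoeff, hQcoeff, ← Finset.sum_mul]
  have hlc : p.leadingCoeff ≠ 0 := leadingCoeff_ne_zero.mpr hp
  field_simp


private lemma chiellini_quad (N cc u z w : ℂ) (hc : cc * (N+2)^2 = -(N+1)) (hI2 : u^2 = -(w^2))
    (hN1 : N+1 ≠ 0) :
    cc * z^2 + 2*u*z + 4*w^2 = cc * (z - 2*u*(N+2)/(N+1)) * (z - 2*u*(N+2)) := by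
  have hmul : (N+1) * (cc * z^2 + 2*u*z + 4*w^2)
      = (N+1) * (cc * (z - 2*u*(N+2)/(N+1)) * (z - 2*u*(N+2))) := by
    have hz2' : (N+1) * (2*u*(N+2)/(N+1)) = 2*u*(N+2) := by
      field_simp
    have expand : (N+1) * (cc * (z - 2*u*(N+2)/(N+1)) * (z - 2*u*(N+2)))
        = cc * ((N+1)*z - (N+1)*(2*u*(N+2)/(N+1))) * (z - 2*u*(N+2)) := by ring
    rw [expand, hz2']
    linear_combination (2*u*z - 4*u^2) * hc + (4*(N+1)) * hI2
  exact mul_left_cancel₀ hN1 hmul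

private lemma final_count (n : ℕ) (hn2 : 2 ≤ n) (ωI : ℂ) (hωI0 : ωI ≠ 0)
    (z2 z3 : ℂ) (hz2 : z2 = 2*ωI*((n:ℂ)+2)/((n:ℂ)+1)) (hz3 : z3 = 2*ωI*((n:ℂ)+2))
    (S : Finset ℂ) (hScard : S.card = n) (v : ℂ → ℂ)
    (hclass : ∀ r ∈ S, v r = 0 ∨ v r = z2 ∨ v r = z3)
    (hsum : ∑ r ∈ S, ωI / (v r - 2*ωI) = 1)
    (hd1 : ∃ T : Finset ℂ, (∀ r, r ∈ T ↔ r ∈ S ∧ v r = 0) ∧ n = 1 + 2 * T.card) :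
    False := by
  obtain ⟨T, hT, hnT⟩ := hd1
  have hN1 : ((n:ℂ)+1) ≠ 0 := Nat.cast_add_one_ne_zero n
  have hTeq : T = S.filter (fun r => v r = 0) := by
    ext r
    rw [hT, Finset.mem_filter]
  obtain ⟨d1, hd1_def⟩ : ∃ d, (S.filter (fun r => v r = 0)).card = d := ⟨_, rfl⟩
  obtain ⟨d2, hd2_def⟩ :
      ∃ d, (((S.filter (fun r => ¬ v r = 0))).filter (fun r => v r = z2)).card = d := ⟨_, rfl⟩
  obtain ⟨d3, hd3_def⟩ :
      ∃ d, (((S.filter (fun r => ¬ v r = 0))).filter (fun r => ¬ v r = z2)).card = d := ⟨_, rfl⟩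
  have ha : d1 + (S.filter (fun r => ¬ v r = 0)).card = n := by
    rw [← hd1_def, ← hScard]
    exact Finset.card_filter_add_card_filter_not (p := fun r => v r = 0)
  have hb : d2 + d3 = (S.filter (fun r => ¬ v r = 0)).card := by
    rw [← hd2_def, ← hd3_def]
    exact Finset.card_filter_add_card_filter_not (p := fun r => v r = z2)
  -- values of the summand on each class
  have hval1 : ∀ r ∈ S.filter (fun r => v r = 0), ωI / (v r - 2*ωI) = -(1/2 : ℂ) := by
    intro r hr
    rw [Finset.mem_filter] at hr
    rw [hr.2]
    rw [div_eq_iff (by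
      simp only [zero_sub, neg_ne_zero]
      exact mul_ne_zero two_ne_zero hωI0)]
    ring
  have hval2 : ∀ r ∈ (S.filter (fun r => ¬ v r = 0)).filter (fun r => v r = z2),
      ωI / (v r - 2*ωI) = ((n:ℂ)+1)/2 := by
    intro r hr
    rw [Finset.mem_filter] at hr
    rw [hr.2]
    have h1 : z2 - 2*ωI = 2*ωI/((n:ℂ)+1) := by
      rw [hz2]
      field_simp
      ring
    rw [h1, div_div_eq_mul_div]
    rw [div_eq_div_iff (mul_ne_zero two_ne_zero hωI0) two_ne_zero]
    ring
  have hval3 : ∀ r ∈ (S.filter (fun r => ¬ v r = 0)).filter (fun r => ¬ v r = z2),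
      ωI / (v r - 2*ωI) = 1/(2*((n:ℂ)+1)) := by
    intro r hr
    rw [Finset.mem_filter] at hr
    have hrS' := hr.1
    rw [Finset.mem_filter] at hrS'
    have h1 : v r = z3 := by
      rcases hclass r hrS'.1 with h | h | h
      · exact absurd h hrS'.2
      · exact absurd h hr.2
      · exact h
    rw [h1, hz3]
    rw [show 2*ωI*((n:ℂ)+2) - 2*ωI = 2*ωI*((n:ℂ)+1) by ring]
    rw [div_eq_div_iff (by exact mul_ne_zero (mul_ne_zero two_ne_zero hωI0) hN1)
      (mul_ne_zero two_ne_zero hN1)]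
    ring
  -- assemble the sum
  have hs1 := Finset.sum_filter_add_sum_filter_not S (fun r => v r = 0)
    (fun r => ωI / (v r - 2*ωI))
  have hs2 := Finset.sum_filter_add_sum_filter_not (S.filter (fun r => ¬ v r = 0))
    (fun r => v r = z2) (fun r => ωI / (v r - 2*ωI))
  have e1 : ∑ r ∈ S.filter (fun r => v r = 0), ωI / (v r - 2*ωI) = (d1:ℂ) * (-(1/2 : ℂ)) := by
    rw [Finset.sum_congr rfl hval1, Finset.sum_const, nsmul_eq_mul, hd1_def]
  have e2 : ∑ r ∈ (S.filter (fun r => ¬ v r = 0)).filter (fun r => v r = z2),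
      ωI / (v r - 2*ωI) = (d2:ℂ) * (((n:ℂ)+1)/2) := by
    rw [Finset.sum_congr rfl hval2, Finset.sum_const, nsmul_eq_mul, hd2_def]
  have e3 : ∑ r ∈ (S.filter (fun r => ¬ v r = 0)).filter (fun r => ¬ v r = z2),
      ωI / (v r - 2*ωI) = (d3:ℂ) * (1/(2*((n:ℂ)+1))) := by
    rw [Finset.sum_congr rfl hval3, Finset.sum_const, nsmul_eq_mul, hd3_def]
  have htot : (d1:ℂ) * (-(1/2 : ℂ)) + ((d2:ℂ) * (((n:ℂ)+1)/2) + (d3:ℂ) * (1/(2*((n:ℂ)+1)))) = 1 := by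
    rw [← e1, ← e2, ← e3, ← hsum, ← hs1, hs2]
  have hnat : (d2:ℂ) * (((n:ℂ)+1))^2 + (d3:ℂ) = 2 * ((n:ℂ)+1) + (d1:ℂ) * ((n:ℂ)+1) := by
    have h2 : ((2:ℂ)) ≠ 0 := two_ne_zero
    field_simp at htot
    linear_combination htot
  have hnat2 : d2 * (n+1)^2 + d3 = 2 * (n+1) + d1 * (n+1) := by
    have h1 : ((d2 * (n+1)^2 + d3 : ℕ) : ℂ) = ((2 * (n+1) + d1 * (n+1) : ℕ) : ℂ) := by
      push_cast
      linear_combination hnat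
    exact_mod_cast h1
  have hTcard : T.card = d1 := by rw [hTeq, ← hd1_def]
  rw [hTcard] at hnT
  -- final contradiction
  rcases Nat.eq_zero_or_pos d2 with hd20 | hd2pos
  · rw [hd20] at hnat2
    simp at hnat2
    have h2 : 0 ≤ d1 * (n + 1) := Nat.zero_le _
    omega
  · have h1 : (n + 1) ^ 2 ≤ d2 * (n + 1) ^ 2 := Nat.le_mul_of_pos_left _ hd2pos
    have h2 : (n + 1) * (n + 1) ≤ (n + 1) * (2 + d1) := by
      have h3 : (n + 1) * (n + 1) = (n + 1) ^ 2 := by ring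
      have h4 : (n + 1) * (2 + d1) = 2 * (n + 1) + d1 * (n + 1) := by ring
      omega
    have h5 : n + 1 ≤ 2 + d1 := Nat.le_of_mul_le_mul_left h2 (by omega)
    omega

set_option maxHeartbeats 4000000 in
/-- If `f` is a real polynomial of degree at least 2 and `ω > 0`, with `I`
the antiderivative of `X·f` vanishing at `0` and `g` the polynomial with
`X³·g = ω²·X⁴ + I²`, then for every real `c` the Chiellini identity fails:
`g'·f − g·f' + c·f³ ≠ 0`. -/
theorem stmt_1 (f : ℝ[X]) (hf : 2 ≤ f.natDegree) (ω : ℝ) (hω : 0 < ω)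
    (I g : ℝ[X]) (hI0 : I.eval 0 = 0) (hI' : derivative I = X * f)
    (hg : X ^ 3 * g = C (ω ^ 2) * X ^ 4 + I ^ 2) :
    ∀ c : ℝ, derivative g * f - g * derivative f + C c * f ^ 3 ≠ 0 := by
  intro c hE
  have hf0 : f ≠ 0 := fun h => by simp [h] at hf
  set n := f.natDegree with hn
  have hn2 : 2 ≤ n := hf
  -- I is divisible by X^2
  have hIc0 : I.coeff 0 = 0 := by rwa [coeff_zero_eq_eval_zero]
  have hIc1 : I.coeff 1 = 0 := by
    have h1 : (derivative I).coeff 0 = I.coeff 1 * ((0:ℕ) + 1 : ℝ) := coeff_derivative I 0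
    rw [hI'] at h1
    have h2 : (X * f).coeff 0 = 0 := by
      rw [mul_coeff_zero, coeff_X_zero, zero_mul]
    rw [h2] at h1
    push_cast at h1
    linarith
  obtain ⟨J, hJ⟩ : X ^ 2 ∣ I := by
    rw [X_pow_dvd_iff]
    intro d hd
    interval_cases d <;> assumption
  -- f = 2J + X J'
  have hfJ : f = 2 * J + X * derivative J := by
    have h1 : derivative I = X * (2 * J + X * derivative J) := by
      rw [hJ, show (X:ℝ[X]) ^ 2 * J = X * (X * J) by ring, derivative_mul,
        derivative_mul, derivative_X]
      ring
    rw [hI'] at h1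
    exact mul_left_cancel₀ X_ne_zero h1
  -- g = X (ω² + J²)
  have hu : g = X * (C (ω ^ 2) + J ^ 2) := by
    have h1 : X ^ 3 * g = X ^ 3 * (X * (C (ω ^ 2) + J ^ 2)) := by
      rw [hg, hJ]
      ring
    exact mul_left_cancel₀ (pow_ne_zero 3 X_ne_zero) h1
  -- coefficient relation
  have hcoeff : ∀ k : ℕ, f.coeff k = ((k : ℝ) + 2) * J.coeff k := by
    intro k
    rw [hfJ]
    cases k with
    | zero =>
      rw [coeff_add]
      have e1 : (2 * J).coeff 0 = 2 * J.coeff 0 := by simp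
      have e2 : (X * derivative J).coeff 0 = 0 := by
        rw [mul_coeff_zero, coeff_X_zero, zero_mul]
      rw [e1, e2]
      norm_num
    | succ m =>
      rw [coeff_add, coeff_X_mul, coeff_derivative]
      have h2 : (2 * J).coeff (m + 1) = 2 * J.coeff (m + 1) := by
        simp
      rw [h2]
      push_cast
      ring
  have hfleadc : f.coeff n ≠ 0 := by
    rw [← leadingCoeff]
    exact leadingCoeff_ne_zero.mpr hf0
  have hJn : J.coeff n ≠ 0 := by
    intro h
    rw [hcoeff n, h, mul_zero] at hfleadc
    exact hfleadc rfl
  set b := J.coeff n with hb_def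
  have hb : b ≠ 0 := hJn
  have hJle : J.natDegree ≤ n := by
    rw [natDegree_le_iff_coeff_eq_zero]
    intro N hN
    have h1 : f.coeff N = 0 := coeff_eq_zero_of_natDegree_lt hN
    rw [hcoeff N] at h1
    rcases mul_eq_zero.mp h1 with h | h
    · exfalso
      have : (0:ℝ) < (N : ℝ) + 2 := by positivity
      linarith
    · exact h
  have hfle : f.natDegree ≤ n := le_refl n
  have hflead : f.coeff n = ((n : ℝ) + 2) * b := hcoeff n
  -- coefficient of g at 2n+1
  have hg1 : g.coeff (2 * n + 1) = b ^ 2 := by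
    rw [hu, coeff_X_mul, coeff_add, coeff_C, if_neg (by omega)]
    have h1 : (J ^ 2).coeff (2 * n) = J.coeff n * J.coeff n := by
      rw [show (2 * n) = n + n by ring, sq]
      exact coeff_mul_add_eq_of_natDegree_le hJle hJle
    rw [h1]
    ring
  have hgle : g.natDegree ≤ 2 * n + 1 := by
    rw [hu]
    refine natDegree_mul_le.trans ?_
    have h1 : (C (ω ^ 2) + J ^ 2).natDegree ≤ 2 * n := by
      refine (natDegree_add_le _ _).trans ?_
      rw [max_le_iff]
      refine ⟨by simp, ?_⟩
      refine (natDegree_pow_le).trans ?_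
      omega
    have h2 : (X : ℝ[X]).natDegree = 1 := natDegree_X
    omega
  have hdgle : (derivative g).natDegree ≤ 2 * n := by
    refine (natDegree_derivative_le g).trans ?_
    omega
  have hgderiv : (derivative g).coeff (2 * n) = b ^ 2 * (2 * (n:ℝ) + 1) := by
    rw [coeff_derivative, hg1]
    push_cast
    ring
  have hdfle : (derivative f).natDegree ≤ n - 1 := by
    refine (natDegree_derivative_le f).trans ?_
    omega
  have hf'c : (derivative f).coeff (n - 1) = ((n:ℝ) + 2) * b * n := by
    rw [coeff_derivative]
    have h1 : n - 1 + 1 = n := by omega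
    rw [h1, hflead]
    have h2 : ((n - 1 : ℕ) : ℝ) + 1 = (n : ℝ) := by
      have : (1:ℕ) ≤ n := by omega
      push_cast [this]
      ring
    rw [h2]
  -- extract coefficient 3n of the identity
  have hE3 : (derivative g * f).coeff (3*n) - (g * derivative f).coeff (3*n)
      + (C c * f ^ 3).coeff (3*n) = 0 := by
    have h1 := congrArg (fun P : ℝ[X] => P.coeff (3*n)) hE
    simpa [coeff_add, coeff_sub] using h1
  have t1 : (derivative g * f).coeff (3*n) = (b ^ 2 * (2 * (n:ℝ) + 1)) * (((n:ℝ) + 2) * b) := by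
    have h := coeff_mul_add_eq_of_natDegree_le hdgle hfle
    rw [show 3*n = 2*n + n by ring, h, hgderiv, hflead]
  have t2 : (g * derivative f).coeff (3*n) = b ^ 2 * (((n:ℝ) + 2) * b * n) := by
    have h := coeff_mul_add_eq_of_natDegree_le hgle hdfle
    rw [show 3*n = (2*n+1) + (n-1) by omega, h, hg1, hf'c]
  have t3 : (C c * f ^ 3).coeff (3*n) = c * (((n:ℝ) + 2) * b) ^ 3 := by
    rw [coeff_C_mul]
    have h := coeff_pow_of_natDegree_le (m := 3) hfle
    rw [h, hflead]
  rw [t1, t2, t3] at hE3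
  have hc : c * ((n:ℝ) + 2) ^ 2 = -((n:ℝ) + 1) := by
    have hkey : ((n:ℝ) + 2) * b ^ 3 * (((n:ℝ) + 1) + c * ((n:ℝ) + 2) ^ 2) = 0 := by
      linear_combination hE3
    rcases mul_eq_zero.mp hkey with h | h
    · exfalso
      exact (mul_ne_zero (by positivity) (pow_ne_zero 3 hb)) h
    · linarith
  have hc0 : c ≠ 0 := by
    intro h
    rw [h, zero_mul] at hc
    have : (0:ℝ) < (n:ℝ) + 1 := by positivity
    linarith
  -- evaluation at 0
  have hgeval0 : g.eval 0 = 0 := by rw [hu]; simp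
  have hdg0 : (derivative g).eval 0 = ω ^ 2 + (J.eval 0) ^ 2 := by
    rw [hu, derivative_mul, derivative_X]
    simp
  have hfeval0 : f.eval 0 = 2 * J.eval 0 := by rw [hfJ]; simp
  have hE0 : (derivative g).eval 0 * f.eval 0 - g.eval 0 * (derivative f).eval 0
      + c * (f.eval 0) ^ 3 = 0 := by
    have h1 := congrArg (fun P : ℝ[X] => P.eval 0) hE
    simpa using h1
  rw [hgeval0, hdg0, hfeval0] at hE0
  have hj0 : J.eval 0 = 0 := by
    by_contra hne
    have hkey : J.eval 0 * (2 * (((n:ℝ)+2)^2 * ω^2 + (J.eval 0)^2 * (n:ℝ)^2)) = 0 := by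
      linear_combination ((n:ℝ)+2)^2 * hE0 - 8 * (J.eval 0)^3 * hc
    rcases mul_eq_zero.mp hkey with h | h
    · exact hne h
    · have h1 : (0:ℝ) < ((n:ℝ)+2)^2 * ω^2 := mul_pos (by positivity) (pow_pos hω 2)
      nlinarith [sq_nonneg (J.eval 0), sq_nonneg ((n:ℝ))]
  obtain ⟨K, hK⟩ : (X : ℝ[X]) ∣ J := by
    rw [X_dvd_iff, coeff_zero_eq_eval_zero]
    exact hj0
  have hKco : ∀ m : ℕ, K.coeff m = J.coeff (m + 1) := by
    intro m
    rw [hK, coeff_X_mul]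
  have hKdegle : K.natDegree ≤ n - 1 := by
    rw [natDegree_le_iff_coeff_eq_zero]
    intro N hN
    rw [hKco N]
    refine coeff_eq_zero_of_natDegree_lt ?_
    omega
  have hKlead : K.coeff (n - 1) = b := by
    rw [hKco, show n - 1 + 1 = n by omega]
  have hJdeg : J.natDegree = n := le_antisymm hJle (le_natDegree_of_ne_zero hJn)
  -- move to the complex numbers
  set φ : ℝ →+* ℂ := algebraMap ℝ ℂ with hφ
  have hφinj : Function.Injective φ := φ.injective
  set F := f.map φ with hF_def
  set G := g.map φ with hG_def
  set Jc := J.map φ with hJc_def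
  set Kc := K.map φ with hKc_def
  have hF0 : F ≠ 0 := (Polynomial.map_ne_zero_iff hφinj).mpr hf0
  have hFdeg : F.natDegree = n := by
    rw [hF_def, natDegree_map_eq_of_injective hφinj]
  have hEc : derivative G * F - G * derivative F + C ((c:ℝ) : ℂ) * F ^ 3 = 0 := by
    have h1 := congrArg (fun P : ℝ[X] => P.map φ) hE
    simp only [Polynomial.map_add, Polynomial.map_sub, Polynomial.map_mul, Polynomial.map_pow,
      Polynomial.map_zero, map_C] at h1
    rw [← derivative_map, ← derivative_map] at h1
    have h2 : φ c = ((c:ℝ) : ℂ) := rfl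
    rw [h2] at h1
    exact h1
  set ωI : ℂ := (ω:ℂ) * Complex.I with hωI_def
  have hωI0 : ωI ≠ 0 := by
    refine mul_ne_zero ?_ Complex.I_ne_zero
    exact_mod_cast ne_of_gt hω
  have hI2 : ωI ^ 2 = -((ω:ℂ) ^ 2) := by
    rw [hωI_def, mul_pow, Complex.I_sq]
    ring
  set p : ℂ[X] := Jc - C ωI with hp_def
  set q : ℂ[X] := Jc + C ωI with hq_def
  have hmapR : ∀ (P : ℝ[X]) (z : ℂ), (P.map φ).eval z = eval₂ φ z P := fun P z => eval_map φ z
  -- basic facts about Jc, Kc, p, q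
  have hJcco : ∀ k, Jc.coeff k = ((J.coeff k : ℝ) : ℂ) := by
    intro k
    rw [hJc_def, coeff_map]
    simp [hφ]
  have hJcdeg : Jc.natDegree = n := by rw [hJc_def, natDegree_map_eq_of_injective hφinj, hJdeg]
  have hJc0 : Jc ≠ 0 := by
    refine (Polynomial.map_ne_zero_iff hφinj).mpr ?_
    intro h
    rw [hb_def, h] at hb
    simp at hb
  have hB0 : ((b:ℝ) : ℂ) ≠ 0 := by exact_mod_cast hb
  have hpco : ∀ k, 1 ≤ k → p.coeff k = Jc.coeff k := by
    intro k hk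
    rw [hp_def, coeff_sub, coeff_C, if_neg (by omega), sub_zero]
  have hpdeg : p.natDegree = n := by rw [hp_def, natDegree_sub_C, hJcdeg]
  have hplead : p.leadingCoeff = ((b:ℝ):ℂ) := by
    rw [leadingCoeff, hpdeg, hpco n (by omega), hJcco n]
  have hp0 : p ≠ 0 := by
    refine leadingCoeff_ne_zero.mp ?_
    rw [hplead]
    exact hB0
  -- structural identities over the complexes
  have hFJc : F = 2 * Jc + X * derivative Jc := by
    rw [hF_def, hJc_def, hfJ]
    simp only [Polynomial.map_add, Polynomial.map_mul, Polynomial.map_ofNat, map_X]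
    rw [← derivative_map]
  have hJcK : Jc = X * Kc := by
    rw [hJc_def, hKc_def, hK, Polynomial.map_mul, map_X]
  have hGc : G = X * (p * q) := by
    rw [hG_def, hu, hp_def, hq_def]
    simp only [Polynomial.map_mul, Polynomial.map_add, Polynomial.map_pow, map_C, map_X]
    have h2 : φ (ω ^ 2) = (ω:ℂ) ^ 2 := by simp [hφ]
    have h3 : C ((ω:ℂ) ^ 2) = -(C ωI) ^ 2 := by
      rw [← map_pow, hI2]
      simp
    rw [h2, h3]
    ring
  have hJc00 : Jc.eval 0 = 0 := by rw [hJcK]; simp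
  have hpe0 : p.eval 0 = -ωI := by rw [hp_def]; simp [hJc00]
  have hqe0 : q.eval 0 = ωI := by rw [hq_def]; simp [hJc00]
  have hq0 : q ≠ 0 := by
    intro h
    rw [h] at hqe0
    simp at hqe0
    exact hωI0 hqe0.symm
  have hdp : derivative p = derivative Jc := by rw [hp_def]; simp
  have hdq : derivative q = derivative Jc := by rw [hq_def]; simp
  have hFeval : ∀ r : ℂ, F.eval r = 2 * Jc.eval r + r * (derivative Jc).eval r := by
    intro r
    rw [hFJc]
    simp
  have hcC0 : ((c:ℝ):ℂ) ≠ 0 := by exact_mod_cast hc0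
  have hEceval : ∀ r : ℂ, (derivative G).eval r * F.eval r - G.eval r * (derivative F).eval r
      + ((c:ℝ):ℂ) * (F.eval r) ^ 3 = 0 := by
    intro r
    have h1 := congrArg (fun P : ℂ[X] => P.eval r) hEc
    simpa using h1
  have hGeval : ∀ r : ℂ, G.eval r = r * (p.eval r * q.eval r) := by
    intro r
    rw [hGc]
    simp
  have hdGeval : ∀ r : ℂ, (derivative G).eval r = p.eval r * q.eval r
      + r * ((derivative Jc).eval r * q.eval r + p.eval r * (derivative Jc).eval r) := by
    intro r
    rw [hGc, derivative_mul, derivative_mul, derivative_X, hdp, hdq]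
    simp
  -- the key relation at roots of p
  have hrelp : ∀ r : ℂ, p.eval r = 0 →
      F.eval r * (((c:ℝ):ℂ) * (F.eval r) ^ 2 + 2 * ωI * F.eval r + 4 * (ω:ℂ) ^ 2) = 0 := by
    intro r hr
    have hJr : Jc.eval r = ωI := by
      have h1 : p.eval r = Jc.eval r - ωI := by rw [hp_def]; simp
      rw [h1] at hr
      linear_combination hr
    have hqr : q.eval r = 2 * ωI := by
      rw [hq_def]
      simp [hJr]
      ring
    have hF2 : r * (derivative Jc).eval r = F.eval r - 2 * ωI := by
      rw [hFeval r, hJr]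
      ring
    have h0 := hEceval r
    rw [hGeval, hdGeval, hr, hqr] at h0
    linear_combination h0 - (2 * ωI * F.eval r) * hF2 + (4 * F.eval r) * hI2
  -- p and q are squarefree
  have hdJc0 : derivative Jc ≠ 0 := by
    intro h
    have h1 : Jc.natDegree = 0 := natDegree_eq_zero_of_derivative_eq_zero h
    omega
  have hsq : ∀ r : ℂ, 2 ≤ rootMultiplicity r p → False := by
    intro r h2
    obtain ⟨s, hs⟩ : (X - C r) ^ 2 ∣ p := (le_rootMultiplicity_iff hp0).mp h2
    have hpr : p.eval r = 0 := by rw [hs]; simp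
    have hdpr : (derivative Jc).eval r = 0 := by
      rw [← hdp, hs, derivative_mul, derivative_pow, derivative_X_sub_C]
      simp
    have hJr : Jc.eval r = ωI := by
      have h1 : p.eval r = Jc.eval r - ωI := by rw [hp_def]; simp
      rw [h1] at hpr
      linear_combination hpr
    have hFr : F.eval r = 2 * ωI := by
      rw [hFeval r, hJr, hdpr]
      ring
    have h5 := hrelp r hpr
    rw [hFr] at h5
    have h6 : ((c:ℝ):ℂ) * ωI ^ 3 = 0 := by linear_combination h5 / 8 - ωI * hI2
    rcases mul_eq_zero.mp h6 with h | h
    · exact hcC0 h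
    · exact pow_ne_zero 3 hωI0 h
  have hsqq : ∀ r : ℂ, 2 ≤ rootMultiplicity r q → False := by
    intro r h2
    obtain ⟨s, hs⟩ : (X - C r) ^ 2 ∣ q := (le_rootMultiplicity_iff hq0).mp h2
    have hqr : q.eval r = 0 := by rw [hs]; simp
    have hdqr : (derivative Jc).eval r = 0 := by
      rw [← hdq, hs, derivative_mul, derivative_pow, derivative_X_sub_C]
      simp
    have hJr : Jc.eval r = -ωI := by
      have h1 : q.eval r = Jc.eval r + ωI := by rw [hq_def]; simp
      rw [h1] at hqr
      linear_combination hqr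
    have hpr : p.eval r = -2 * ωI := by
      rw [hp_def]
      simp [hJr]
      ring
    have hFr : F.eval r = -2 * ωI := by
      rw [hFeval r, hJr, hdqr]
      ring
    have h0 := hEceval r
    rw [hGeval, hdGeval, hqr, hdqr, hFr] at h0
    have h6 : ((c:ℝ):ℂ) * ωI ^ 3 = 0 := by linear_combination -h0 / 8
    rcases mul_eq_zero.mp h6 with h | h
    · exact hcC0 h
    · exact pow_ne_zero 3 hωI0 h
  -- the Wronskian multiplicity bound
  have hG0 : G ≠ 0 := by
    rw [hGc]
    exact mul_ne_zero X_ne_zero (mul_ne_zero hp0 hq0)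
  have hWro : derivative G * F - G * derivative F = C (-((c:ℝ):ℂ)) * F ^ 3 := by
    rw [map_neg]
    linear_combination hEc
  have hmlt : ∀ r, rootMultiplicity r F ≤ rootMultiplicity r G :=
    wronskian_mult hF0 hG0 (neg_ne_zero.mpr hcC0) hWro
  -- multiplicity-one facts
  have hpm1 : ∀ r, rootMultiplicity r p ≤ 1 := by
    intro r
    by_contra h
    exact hsq r (by omega)
  have hqm1 : ∀ r, rootMultiplicity r q ≤ 1 := by
    intro r
    by_contra h
    exact hsqq r (by omega)
  have hpq_disj : ∀ r : ℂ, p.eval r = 0 → q.eval r = 0 → False := by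
    intro r h1 h2
    have h3 : (2:ℂ) * ωI = 0 := by
      have e1 : p.eval r = Jc.eval r - ωI := by rw [hp_def]; simp
      have e2 : q.eval r = Jc.eval r + ωI := by rw [hq_def]; simp
      rw [e1] at h1
      rw [e2] at h2
      linear_combination h2 - h1
    simp at h3
    exact hωI0 h3
  have hp00 : p.eval 0 ≠ 0 := by rw [hpe0]; exact neg_ne_zero.mpr hωI0
  have hq00 : q.eval 0 ≠ 0 := by rw [hqe0]; exact hωI0
  -- roots of G
  have hrootsG : G.roots = ({0} : Multiset ℂ) + (p.roots + q.roots) := by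
    rw [hGc, roots_mul (by rw [← hGc]; exact hG0), roots_mul (mul_ne_zero hp0 hq0), roots_X]
  have hcountG : ∀ r : ℂ, G.roots.count r ≤ 1 := by
    intro r
    rw [hrootsG]
    rw [Multiset.count_add, Multiset.count_add, count_roots, count_roots]
    by_cases h0 : r = 0
    · have e1 : rootMultiplicity r p = 0 := by
        rw [rootMultiplicity_eq_zero]
        intro h
        rw [h0] at h
        exact hp00 h
      have e2 : rootMultiplicity r q = 0 := by
        rw [rootMultiplicity_eq_zero]
        intro h
        rw [h0] at h
        exact hq00 h
      rw [e1, e2]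
      simp [h0]
    · have e0 : Multiset.count r ({0} : Multiset ℂ) = 0 := by
        simp [h0]
      rw [e0]
      by_cases hpr : p.eval r = 0
      · have e2 : rootMultiplicity r q = 0 := by
          rw [rootMultiplicity_eq_zero]
          intro h
          exact hpq_disj r hpr h
        have := hpm1 r
        omega
      · have e1 : rootMultiplicity r p = 0 := by
          rw [rootMultiplicity_eq_zero]
          exact hpr
        have := hqm1 r
        omega
  have hcountF : ∀ r : ℂ, F.roots.count r ≤ 1 := by
    intro r
    refine le_trans ?_ (hcountG r)
    rw [count_roots, count_roots]
    exact hmlt r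
  have hFnodup : F.roots.Nodup := Multiset.nodup_iff_count_le_one.mpr hcountF
  have hcardF : Multiset.card F.roots = n := by
    rw [splits_iff_card_roots.mp (IsAlgClosed.splits F), hFdeg]
  have hcardp : Multiset.card p.roots = n := by
    rw [splits_iff_card_roots.mp (IsAlgClosed.splits p), hpdeg]
  have hpnodup : p.roots.Nodup := by
    refine Multiset.nodup_iff_count_le_one.mpr ?_
    intro r
    rw [count_roots]
    exact hpm1 r
  set S : Finset ℂ := p.roots.toFinset with hS_def
  have hScard : S.card = n := by
    rw [hS_def, Multiset.toFinset_card_of_nodup hpnodup, hcardp]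
  have hmemS : ∀ r, r ∈ S ↔ p.eval r = 0 := by
    intro r
    rw [hS_def, Multiset.mem_toFinset, mem_roots hp0]
    exact Iff.rfl
  set Sq : Finset ℂ := q.roots.toFinset with hSq_def
  have hmemSq : ∀ r, r ∈ Sq ↔ q.eval r = 0 := by
    intro r
    rw [hSq_def, Multiset.mem_toFinset, mem_roots hq0]
    exact Iff.rfl
  set Tf : Finset ℂ := F.roots.toFinset with hTf_def
  have hmemTf : ∀ r, r ∈ Tf ↔ F.eval r = 0 := by
    intro r
    rw [hTf_def, Multiset.mem_toFinset, mem_roots hF0]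
    exact Iff.rfl
  have hTfcard : Tf.card = n := by
    rw [hTf_def, Multiset.toFinset_card_of_nodup hFnodup, hcardF]
  have hFe0 : F.eval 0 = 0 := by
    rw [hFJc]
    simp [hJc00]
  -- every root of F is 0 or a root of p or of q
  have hsub : ∀ r ∈ Tf, r = 0 ∨ r ∈ S ∨ r ∈ Sq := by
    intro r hr
    have h1 : 1 ≤ F.roots.count r := by
      rw [hTf_def, Multiset.mem_toFinset] at hr
      exact Multiset.one_le_count_iff_mem.mpr hr
    have h2 : 1 ≤ G.roots.count r := by
      have h3 : F.roots.count r ≤ G.roots.count r := by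
        rw [count_roots, count_roots]
        exact hmlt r
      omega
    rw [hrootsG, Multiset.count_add, Multiset.count_add] at h2
    by_cases h0 : r = 0
    · exact Or.inl h0
    · right
      have e0 : Multiset.count r ({0} : Multiset ℂ) = 0 := by simp [h0]
      rw [e0] at h2
      rcases Nat.eq_zero_or_pos (p.roots.count r) with hz | hz
      · right
        rw [hSq_def, Multiset.mem_toFinset]
        refine Multiset.one_le_count_iff_mem.mp ?_
        omega
      · left
        rw [hS_def, Multiset.mem_toFinset]
        exact Multiset.one_le_count_iff_mem.mp hz
  set P1 : ℂ → Prop := fun r => F.eval r = 0 with hP1_def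
  set d1 := (S.filter P1).card with hd1_def
  have hTfeq : Tf = insert 0 ((S.filter P1) ∪ (Sq.filter P1)) := by
    ext r
    rw [Finset.mem_insert, Finset.mem_union, Finset.mem_filter, Finset.mem_filter]
    constructor
    · intro hr
      have hFr : F.eval r = 0 := (hmemTf r).mp hr
      rcases hsub r hr with h | h | h
      · exact Or.inl h
      · exact Or.inr (Or.inl ⟨h, hFr⟩)
      · exact Or.inr (Or.inr ⟨h, hFr⟩)
    · intro hr
      rw [hmemTf r]
      rcases hr with h | ⟨_, h⟩ | ⟨_, h⟩
      · rw [h]; exact hFe0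
      · exact h
      · exact h
  have h0notS : (0:ℂ) ∉ S := fun h => hp00 ((hmemS 0).mp h)
  have h0notSq : (0:ℂ) ∉ Sq := fun h => hq00 ((hmemSq 0).mp h)
  have hdisjSSq : Disjoint (S.filter P1) (Sq.filter P1) := by
    rw [Finset.disjoint_left]
    intro r h1 h2
    rw [Finset.mem_filter] at h1 h2
    exact hpq_disj r ((hmemS r).mp h1.1) ((hmemSq r).mp h2.1)
  have hcount1 : n = 1 + d1 + (Sq.filter P1).card := by
    rw [← hTfcard, hTfeq]
    rw [Finset.card_insert_of_notMem (by
      rw [Finset.mem_union]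
      rintro (h | h)
      · exact h0notS (Finset.mem_of_mem_filter 0 h)
      · exact h0notSq (Finset.mem_of_mem_filter 0 h))]
    rw [Finset.card_union_of_disjoint hdisjSSq]
    omega
  -- conjugation bijection
  have hconjq : ∀ r : ℂ, q.eval r = 0 → p.eval ((starRingEnd ℂ) r) = 0 := by
    intro r hr
    have e2 : q.eval r = Jc.eval r + ωI := by rw [hq_def]; simp
    have e1 : p.eval ((starRingEnd ℂ) r) = Jc.eval ((starRingEnd ℂ) r) - ωI := by
      rw [hp_def]; simp
    have e3 : Jc.eval ((starRingEnd ℂ) r) = (starRingEnd ℂ) (Jc.eval r) := by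
      rw [hJc_def]
      exact conj_eval J r
    have e4 : (starRingEnd ℂ) ωI = -ωI := by
      rw [hωI_def]
      simp
    rw [e1, e3]
    rw [e2] at hr
    have e5 : Jc.eval r = -ωI := by linear_combination hr
    rw [e5, map_neg, e4]
    simp
  have hconjF : ∀ r : ℂ, F.eval r = 0 → F.eval ((starRingEnd ℂ) r) = 0 := by
    intro r hr
    have e3 : F.eval ((starRingEnd ℂ) r) = (starRingEnd ℂ) (F.eval r) := by
      rw [hF_def]
      exact conj_eval f r
    rw [e3, hr]
    simp
  have hconjp : ∀ r : ℂ, p.eval r = 0 → q.eval ((starRingEnd ℂ) r) = 0 := by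
    intro r hr
    have e2 : p.eval r = Jc.eval r - ωI := by rw [hp_def]; simp
    have e1 : q.eval ((starRingEnd ℂ) r) = Jc.eval ((starRingEnd ℂ) r) + ωI := by
      rw [hq_def]; simp
    have e3 : Jc.eval ((starRingEnd ℂ) r) = (starRingEnd ℂ) (Jc.eval r) := by
      rw [hJc_def]
      exact conj_eval J r
    have e4 : (starRingEnd ℂ) ωI = -ωI := by
      rw [hωI_def]
      simp
    rw [e1, e3]
    rw [e2] at hr
    have e5 : Jc.eval r = ωI := by linear_combination hr
    rw [e5, e4]
    simp
  have hcardconj : (Sq.filter P1).card = d1 := by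
    rw [hd1_def]
    refine Finset.card_bij' (fun r _ => (starRingEnd ℂ) r) (fun r _ => (starRingEnd ℂ) r)
      ?_ ?_ ?_ ?_
    · intro a ha
      rw [Finset.mem_filter] at ha ⊢
      exact ⟨(hmemS _).mpr (hconjq a ((hmemSq a).mp ha.1)), hconjF a ha.2⟩
    · intro a ha
      rw [Finset.mem_filter] at ha ⊢
      exact ⟨(hmemSq _).mpr (hconjp a ((hmemS a).mp ha.1)), hconjF a ha.2⟩
    · intro a _
      simp
    · intro a _
      simp
  have hn2d1 : n = 1 + 2 * d1 := by omega
  -- class values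
  have hnC1 : ((n:ℕ):ℂ) + 1 ≠ 0 := Nat.cast_add_one_ne_zero n
  have hcCC : ((c:ℝ):ℂ) * (((n:ℕ):ℂ) + 2) ^ 2 = -(((n:ℕ):ℂ) + 1) := by
    have h := congrArg (fun x : ℝ => (x : ℂ)) hc
    push_cast at h
    exact h
  set z2 : ℂ := 2 * ωI * (((n:ℕ):ℂ) + 2) / (((n:ℕ):ℂ) + 1) with hz2_def
  set z3 : ℂ := 2 * ωI * (((n:ℕ):ℂ) + 2) with hz3_def
  have hfact : ∀ z : ℂ, ((c:ℝ):ℂ) * z ^ 2 + 2 * ωI * z + 4 * (ω:ℂ) ^ 2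
      = ((c:ℝ):ℂ) * (z - z2) * (z - z3) := by
    intro z
    rw [hz2_def, hz3_def]
    exact chiellini_quad ((n:ℕ):ℂ) _ ωI z (ω:ℂ) hcCC hI2 hnC1
  have hclass : ∀ r ∈ S, F.eval r = 0 ∨ F.eval r = z2 ∨ F.eval r = z3 := by
    intro r hr
    have h1 := hrelp r ((hmemS r).mp hr)
    rw [hfact (F.eval r)] at h1
    rcases mul_eq_zero.mp h1 with h2 | h2
    · exact Or.inl h2
    · rcases mul_eq_zero.mp h2 with h3 | h3
      · rcases mul_eq_zero.mp h3 with h4 | h4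
        · exact absurd h4 hcC0
        · exact Or.inr (Or.inl (sub_eq_zero.mp h4))
      · exact Or.inr (Or.inr (sub_eq_zero.mp h3))
  -- the residue computation
  have hd' : ∀ r ∈ S, r * (derivative p).eval r = F.eval r - 2 * ωI := by
    intro r hr
    have hJr : Jc.eval r = ωI := by
      have h1 : p.eval r = Jc.eval r - ωI := by rw [hp_def]; simp
      have h2 := (hmemS r).mp hr
      rw [h1] at h2
      linear_combination h2
    rw [hdp, hFeval r, hJr]
    ring
  have hFne : ∀ r ∈ S, F.eval r - 2 * ωI ≠ 0 := by
    intro r hr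
    rcases hclass r hr with h | h | h
    · rw [h]
      simp only [zero_sub, neg_ne_zero]
      exact mul_ne_zero two_ne_zero hωI0
    · rw [h, hz2_def]
      intro hcon
      rw [div_sub' hnC1] at hcon
      rcases div_eq_zero_iff.mp hcon with h5 | h5
      · apply hωI0
        have h6 : (2:ℂ) * ωI = 0 := by linear_combination h5
        linear_combination h6 / 2
      · exact absurd h5 hnC1
    · rw [h, hz3_def]
      intro hcon
      have h5 : 2 * ωI * (((n:ℕ):ℂ) + 1) = 0 := by linear_combination hcon
      rcases mul_eq_zero.mp h5 with h6 | h6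
      · apply hωI0
        linear_combination h6 / 2
      · exact absurd h6 hnC1
  have hdpne : ∀ r ∈ S, (derivative p).eval r ≠ 0 := by
    intro r hr hcon
    apply hFne r hr
    rw [← hd' r hr, hcon, mul_zero]
  have hKcdeg : Kc.natDegree + 1 ≤ p.natDegree := by
    rw [hpdeg, hKc_def, natDegree_map_eq_of_injective hφinj]
    omega
  have hdS : ∀ r ∈ p.roots, (derivative p).eval r ≠ 0 := by
    intro r hr
    exact hdpne r (Multiset.mem_toFinset.mpr hr)
  have hcardp' : Multiset.card p.roots = p.natDegree := by rw [hpdeg]; exact hcardp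
  have hressum := residue_sum hp0 hcardp' hpnodup hdS hKcdeg
  have hKccoeff : Kc.coeff (p.natDegree - 1) = ((b:ℝ):ℂ) := by
    rw [hpdeg, hKc_def, coeff_map, hKlead]
    simp [hφ]
  have hress1 : ∑ r ∈ S, Kc.eval r / (derivative p).eval r = 1 := by
    rw [hS_def, hressum, hKccoeff, hplead, div_self hB0]
  have hterm : ∀ r ∈ S, Kc.eval r / (derivative p).eval r = ωI / (F.eval r - 2 * ωI) := by
    intro r hr
    have hKcr : r * Kc.eval r = ωI := by
      have hJr : Jc.eval r = ωI := by
        have h1 : p.eval r = Jc.eval r - ωI := by rw [hp_def]; simp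
        have h2 := (hmemS r).mp hr
        rw [h1] at h2
        linear_combination h2
      rw [← hJr, hJcK]
      simp
    rw [← hd' r hr]
    rw [div_eq_div_iff (hdpne r hr) (by rw [hd' r hr]; exact hFne r hr)]
    linear_combination ((derivative p).eval r) * hKcr
  have hress2 : ∑ r ∈ S, ωI / (F.eval r - 2 * ωI) = 1 := by
    rw [← Finset.sum_congr rfl hterm]
    exact hress1
  refine final_count n hn2 ωI hωI0 z2 z3 hz2_def hz3_def S hScard (fun r => F.eval r) ?_ ?_ ?_
  · intro r hr
    simpa using hclass r hr
  · simpa using hress2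
  · refine ⟨S.filter P1, fun r => ?_, ?_⟩
    · rw [Finset.mem_filter]
    · rw [hd1_def] at hn2d1
      exact hn2d1
end

section
/- Let ω > 0, k ≠ 0 and b be real numbers, and let f = k·X + b. If there is a real number c such that the Chiellini identity g_f′·f − g_f·f′ + c·f³ = 0 holds as polynomials, then c = −2/9 and b·(b²/36 + ω²) = 0; in particular (since ω > 0) b = 0. -/
open Polynomial

/-- Let `ω > 0`, `k ≠ 0`, `b ∈ ℝ` and `f = k·X + b`. With `I` the
antiderivative of `X·f` vanishing at `0` and `g` the polynomial with
`X³·g = ω²·X⁴ + I²`, if some real `c` satisfies the Chiellini identity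
`g'·f − g·f' + c·f³ = 0`, then `c = −2/9` and `b·(b²/36 + ω²) = 0`; in particular
(since `ω > 0`) one has `b = 0`. -/
theorem stmt_2 (ω k b : ℝ) (hω : 0 < ω) (hk : k ≠ 0)
    (f I g : ℝ[X]) (hfdef : f = C k * X + C b)
    (hI0 : I.eval 0 = 0) (hI' : derivative I = X * f)
    (hg : X ^ 3 * g = C (ω ^ 2) * X ^ 4 + I ^ 2)
    (c : ℝ)
    (hCh : derivative g * f - g * derivative f + C c * f ^ 3 = 0) :
    c = -2 / 9 ∧ b * (b ^ 2 / 36 + ω ^ 2) = 0 ∧ b = 0 := by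
  -- identify I
  set J : ℝ[X] := C (k/3) * X^3 + C (b/2) * X^2 with hJ
  have hdJ : derivative J = X * f := by
    apply Polynomial.funext
    intro x
    simp [hJ, hfdef]
    ring
  have hIJ : I = J := by
    have h0 : derivative (I - J) = 0 := by
      rw [derivative_sub, hI', hdJ, sub_self]
    have h1 := eq_C_of_derivative_eq_zero h0
    have h2 : (I - J).eval 0 = 0 := by
      simp [hJ, hI0]
    rw [h1] at h2
    simp only [eval_C] at h2
    rw [h2, map_zero] at h1
    exact sub_eq_zero.mp h1
  -- identify g
  set G : ℝ[X] := C (k^2/9) * X^3 + C (k*b/3) * X^2 + C (ω^2 + b^2/4) * X with hG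
  have hgG : g = G := by
    have h3 : (X : ℝ[X])^3 * g = X^3 * G := by
      rw [hg, hIJ]
      apply Polynomial.funext
      intro x
      simp [hJ, hG]
      ring
    have hX : (X : ℝ[X])^3 ≠ 0 := pow_ne_zero _ X_ne_zero
    exact mul_left_cancel₀ hX h3
  -- evaluate the Chiellini identity
  have H : ∀ x : ℝ, (2*(k^2/9)*k)*x^3 + (3*(k^2/9)*b + (k*b/3)*k)*x^2
      + (2*(k*b/3)*b)*x + (ω^2+b^2/4)*b + c*(k*x+b)^3 = 0 := by
    intro x
    have := congrArg (eval x) hCh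
    rw [hgG, hfdef] at this
    simp only [hG, derivative_add, derivative_C_mul, derivative_X_pow, derivative_X, derivative_C,
      Nat.cast_ofNat, mul_one, eval_add, eval_sub, eval_mul, eval_pow, eval_C, eval_X,
      eval_zero, eval_ofNat] at this
    norm_num at this
    linear_combination this
  have h0 := H 0
  have h1 := H 1
  have hm1 := H (-1)
  have h2 := H 2
  have hA : k^3 * (2/9 + c) * 6 = 0 := by linear_combination h2 - 3*h1 + 3*h0 - hm1
  have hc : c = -2/9 := by
    have hk3 : k^3 ≠ 0 := pow_ne_zero _ hk
    have : (2/9 + c) = 0 := by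
      rcases mul_eq_zero.mp ((mul_eq_zero.mp hA).resolve_right (by norm_num)) with h | h
      · exact absurd h hk3
      · exact h
    linarith
  have hb : b * (b ^ 2 / 36 + ω ^ 2) = 0 := by
    rw [hc] at h0
    linear_combination h0
  refine ⟨hc, hb, ?_⟩
  have hpos : b ^ 2 / 36 + ω ^ 2 > 0 := by positivity
  rcases mul_eq_zero.mp hb with h | h
  · exact h
  · exact absurd h (ne_of_gt hpos)
end

section
/- Let ω > 0 and let f be the nonzero constant polynomial f = a with a ≠ 0. Then: (i) for c ∈ ℝ, the Chiellini identity g_f′·f − g_f·f′ + c·f³ = 0 holds if and only if c = −(ω² + a²/4)/a²; and (ii) this value satisfies c < −1/4, so there is no real number ℓ with ℓ(ℓ+1) = c. Consequently no real ℓ satisfies the Chiellini identity with c = ℓ(ℓ+1) when f is a nonzero constant. -/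
open Polynomial

/-- Let `ω > 0` and `f = C a` a nonzero constant polynomial, with `I` the
antiderivative of `X·f` vanishing at `0` and `g` the polynomial with
`X³·g = ω²·X⁴ + I²`. Then (i) for `c ∈ ℝ` the Chiellini identity
`g'·f − g·f' + c·f³ = 0` holds iff `c = −(ω² + a²/4)/a²`; (ii) this value is `< −1/4`,
so no real `ℓ` has `ℓ(ℓ+1) = c`; consequently no real `ℓ` satisfies the Chiellini
identity with `c = ℓ(ℓ+1)`. -/
theorem stmt_3 (ω a : ℝ) (hω : 0 < ω) (ha : a ≠ 0)
    (f I g : ℝ[X]) (hfdef : f = C a)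
    (hI0 : I.eval 0 = 0) (hI' : derivative I = X * f)
    (hg : X ^ 3 * g = C (ω ^ 2) * X ^ 4 + I ^ 2) :
    (∀ c : ℝ,
        (derivative g * f - g * derivative f + C c * f ^ 3 = 0) ↔
          c = -(ω ^ 2 + a ^ 2 / 4) / a ^ 2) ∧
      -(ω ^ 2 + a ^ 2 / 4) / a ^ 2 < -(1 / 4) ∧
      (¬∃ ℓ : ℝ, ℓ * (ℓ + 1) = -(ω ^ 2 + a ^ 2 / 4) / a ^ 2) ∧
      ¬∃ ℓ : ℝ,
          derivative g * f - g * derivative f + C (ℓ * (ℓ + 1)) * f ^ 3 = 0 := by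
  subst hfdef
  -- First identify I
  have hI : I = C (a / 2) * X ^ 2 := by
    have hd : derivative (I - C (a / 2) * X ^ 2) = 0 := by
      simp [hI', derivative_pow]
      rw [← mul_assoc, ← C_mul, show a / 2 * 2 = a by ring]
      ring
    have hc := Polynomial.eq_C_of_natDegree_eq_zero
      (Polynomial.natDegree_eq_zero_of_derivative_eq_zero hd)
    have he : (I - C (a / 2) * X ^ 2).eval 0 = 0 := by simp [hI0]
    rw [hc] at he
    simp at he
    simp [coeff_sub, he] at hc
    exact sub_eq_zero.mp hc
  -- Identify g
  have hgeq : g = C (ω ^ 2 + a ^ 2 / 4) * X := by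
    have h3 : (X : ℝ[X]) ^ 3 ≠ 0 := pow_ne_zero _ X_ne_zero
    apply mul_left_cancel₀ h3
    rw [hg, hI]
    have h4 : (C (a / 2) * X ^ 2 : ℝ[X]) ^ 2 = C (a ^ 2 / 4) * X ^ 4 := by
      rw [mul_pow, ← C_pow, ← pow_mul, show (a / 2) ^ 2 = a ^ 2 / 4 by ring]
    rw [h4, C_add]
    ring
  subst hgeq
  have key : ∀ c : ℝ,
      (derivative (C (ω ^ 2 + a ^ 2 / 4) * X) * C a -
        (C (ω ^ 2 + a ^ 2 / 4) * X) * derivative (C a) + C c * (C a) ^ 3 = 0) ↔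
      c = -(ω ^ 2 + a ^ 2 / 4) / a ^ 2 := by
    intro c
    rw [derivative_C_mul, derivative_X, derivative_C, mul_one, mul_zero, sub_zero,
      ← C_pow, ← C_mul, ← C_mul, ← C_add, C_eq_zero]
    constructor
    · intro h
      have h2 : a * ((ω ^ 2 + a ^ 2 / 4) + c * a ^ 2) = 0 := by linear_combination h
      have h3 : (ω ^ 2 + a ^ 2 / 4) + c * a ^ 2 = 0 := (mul_eq_zero.mp h2).resolve_left ha
      field_simp
      linarith [h3]
    · intro h
      subst h
      field_simp
      ring
  have hlt : -(ω ^ 2 + a ^ 2 / 4) / a ^ 2 < -(1 / 4) := by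
    have ha2 : 0 < a ^ 2 := by positivity
    rw [div_lt_iff₀ ha2]
    nlinarith [mul_pos hω hω]
  refine ⟨key, hlt, ?_, ?_⟩
  · rintro ⟨ℓ, hℓ⟩
    nlinarith [sq_nonneg (ℓ + 1/2), hlt]
  · rintro ⟨ℓ, hℓ⟩
    have := (key _).mp hℓ
    nlinarith [sq_nonneg (ℓ + 1/2), hlt]
end

section
/- Let ω > 0 and k ≠ 0, and let f = k·X. Then g_f = ω²·X + (k²/9)·X³, and the Chiellini identity g_f′·f − g_f·f′ + c·f³ = 0 holds as polynomials with c = −2/9; moreover the real numbers ℓ satisfying ℓ(ℓ+1) = −2/9 are exactly ℓ = −1/3 and ℓ = −2/3. -/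
open Polynomial

lemma eq_of_deriv_eq {p q : ℝ[X]} (h : derivative p = derivative q)
    (h0 : p.eval 0 = q.eval 0) : p = q := by
  have hd : derivative (p - q) = 0 := by rw [derivative_sub, h, sub_self]
  have hc := Polynomial.eq_C_of_natDegree_eq_zero
    (Polynomial.natDegree_eq_zero_of_derivative_eq_zero hd)
  have h0' : (p - q).eval 0 = 0 := by simp [h0]
  rw [coeff_zero_eq_eval_zero, h0'] at hc
  simpa [sub_eq_zero] using hc

/-- Let `ω > 0`, `k ≠ 0` and `f = k·X`, with `I` the antiderivative of
`X·f` vanishing at `0` and `g` the polynomial with `X³·g = ω²·X⁴ + I²`. Then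
`g = ω²·X + (k²/9)·X³`, the Chiellini identity `g'·f − g·f' + c·f³ = 0` holds with
`c = −2/9`, and the real `ℓ` with `ℓ(ℓ+1) = −2/9` are exactly `ℓ = −1/3` and
`ℓ = −2/3`. -/
theorem stmt_4 (ω k : ℝ) (hω : 0 < ω) (hk : k ≠ 0)
    (f I g : ℝ[X]) (hfdef : f = C k * X)
    (hI0 : I.eval 0 = 0) (hI' : derivative I = X * f)
    (hg : X ^ 3 * g = C (ω ^ 2) * X ^ 4 + I ^ 2) :
    g = C (ω ^ 2) * X + C (k ^ 2 / 9) * X ^ 3 ∧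
      derivative g * f - g * derivative f + C (-2 / 9 : ℝ) * f ^ 3 = 0 ∧
      ∀ ℓ : ℝ, ℓ * (ℓ + 1) = -2 / 9 ↔ ℓ = -1 / 3 ∨ ℓ = -2 / 3 := by
  have hI : I = C (k / 3) * X ^ 3 := by
    apply eq_of_deriv_eq
    · rw [hI', hfdef]
      apply Polynomial.funext
      intro x
      simp
      ring
    · simp [hI0]
  have hgeq : g = C (ω ^ 2) * X + C (k ^ 2 / 9) * X ^ 3 := by
    have hX3 : (X : ℝ[X]) ^ 3 ≠ 0 := pow_ne_zero _ X_ne_zero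
    apply mul_left_cancel₀ hX3
    rw [hg, hI]
    apply Polynomial.funext
    intro x
    simp
    ring
  refine ⟨hgeq, ?_, ?_⟩
  · rw [hgeq, hfdef]
    apply Polynomial.funext
    intro x
    simp [derivative_pow]
    ring
  · intro ℓ
    constructor
    · intro h
      have : (ℓ + 1/3) * (ℓ + 2/3) = 0 := by linarith
      rcases mul_eq_zero.mp this with h' | h'
      · left; linarith
      · right; linarith
    · rintro (h | h) <;> rw [h] <;> norm_num
end

section
/- Let ω > 0 and α > 0. For n ∈ ℕ let φ_n(ξ) = N_n · ξ^{α+1/2} · exp(−ωξ²/16) · L_n^α(ωξ²/8) with N_n = √(2(ω/8)^{α+1}·n!/Γ(n+α+1)). Then the first moment of the probability density equals ∫₀^∞ ξ·φ_n(ξ)² dξ = (ω/8)^{−1/2} · (n!/Γ(n+α+1)) · Σ_{j=0}^{n} Σ_{l=0}^{n} ((−n)_j (−n)_l / ((α+1)_j (α+1)_l)) · Γ(α + 3/2 + j + l)/(j!·l!). -/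
open Real MeasureTheory

/-- The generalized (associated) Laguerre polynomial
`L_n^α(t) = Σ_{j=0}^{n} ((−n)_j / ((α+1)_j · j!)) · t^j`. -/
noncomputable def laguerreL (α : ℝ) (n : ℕ) (t : ℝ) : ℝ :=
  ∑ j ∈ Finset.range (n + 1),
    ((ascPochhammer ℝ j).eval (-(n : ℝ)) /
        ((ascPochhammer ℝ j).eval (α + 1) * (Nat.factorial j))) * t ^ j

/-- For `ω > 0`, `α > 0` and the normalized isotonic eigenfunctions
`φ_n(ξ) = N_n·ξ^{α+1/2}·exp(−ωξ²/16)·L_n^α(ωξ²/8)` with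
`N_n = √(2(ω/8)^{α+1}·n!/Γ(n+α+1))`, the first moment equals
`∫₀^∞ ξ·φ_n(ξ)² dξ = (ω/8)^{−1/2}·(n!/Γ(n+α+1))·
  Σ_{j,l} ((−n)_j (−n)_l / ((α+1)_j (α+1)_l))·Γ(α+3/2+j+l)/(j!·l!)`. -/
theorem stmt_10 (ω α : ℝ) (hω : 0 < ω) (hα : 0 < α) (n : ℕ)
    (N : ℝ)
    (hN : N = Real.sqrt (2 * (ω / 8) ^ (α + 1) * (Nat.factorial n) /
      Real.Gamma (n + α + 1)))
    (φ : ℝ → ℝ)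
    (hφ : ∀ ξ : ℝ, φ ξ =
      N * ξ ^ (α + 1 / 2) * Real.exp (-ω * ξ ^ 2 / 16) * laguerreL α n (ω * ξ ^ 2 / 8)) :
    ∫ ξ in Set.Ioi (0 : ℝ), ξ * (φ ξ) ^ 2 =
      (ω / 8) ^ (-(1 / 2) : ℝ) * ((Nat.factorial n) / Real.Gamma (n + α + 1)) *
        ∑ j ∈ Finset.range (n + 1), ∑ l ∈ Finset.range (n + 1),
          ((ascPochhammer ℝ j).eval (-(n : ℝ)) * (ascPochhammer ℝ l).eval (-(n : ℝ)) /
              ((ascPochhammer ℝ j).eval (α + 1) * (ascPochhammer ℝ l).eval (α + 1))) *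
            Real.Gamma (α + 3 / 2 + j + l) / ((Nat.factorial j) * (Nat.factorial l)) := by
  have hb : (0:ℝ) < ω / 8 := by linarith
  set b : ℝ := ω / 8 with hbdef
  set c : ℕ → ℝ := fun j => (ascPochhammer ℝ j).eval (-(n : ℝ)) /
        ((ascPochhammer ℝ j).eval (α + 1) * (Nat.factorial j)) with hc
  have hΓ : 0 < Real.Gamma (n + α + 1) := Real.Gamma_pos_of_pos (by positivity)
  have hN2 : N ^ 2 = 2 * b ^ (α + 1) * (Nat.factorial n) / Real.Gamma (n + α + 1) := by
    rw [hN, sq_sqrt]; positivity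
  -- pointwise rewriting
  have key : ∀ ξ ∈ Set.Ioi (0:ℝ), ξ * (φ ξ) ^ 2 =
      ∑ j ∈ Finset.range (n + 1), ∑ l ∈ Finset.range (n + 1),
        (N ^ 2 * c j * c l * b ^ (j + l)) *
          (ξ ^ (2*α + 2 + 2*(j:ℝ) + 2*(l:ℝ)) * Real.exp (-b * ξ ^ (2:ℝ))) := by
    intro ξ hξ
    have hξ0 : (0:ℝ) < ξ := hξ
    have hL : laguerreL α n (ω * ξ ^ 2 / 8) =
        ∑ j ∈ Finset.range (n + 1), c j * (b * ξ ^ 2) ^ j := by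
      unfold laguerreL
      refine Finset.sum_congr rfl fun j _ => ?_
      rw [hc, hbdef]; ring_nf
    have hE : Real.exp (-ω * ξ ^ 2 / 16) ^ 2 = Real.exp (-b * ξ ^ (2:ℝ)) := by
      rw [pow_two, ← Real.exp_add, Real.rpow_two]
      congr 1; rw [hbdef]; ring
    have hA : (ξ ^ (α + 1/2)) ^ 2 = ξ ^ (2*α + 1) := by
      rw [← Real.rpow_natCast (ξ ^ (α + 1/2)) 2, ← Real.rpow_mul hξ0.le]
      norm_num; ring_nf
    rw [hφ, hL, mul_pow, mul_pow, mul_pow, pow_two (∑ j ∈ Finset.range (n+1), _),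
      Finset.sum_mul_sum]
    rw [Finset.mul_sum, Finset.mul_sum]
    refine Finset.sum_congr rfl fun j _ => ?_
    rw [Finset.mul_sum, Finset.mul_sum]
    refine Finset.sum_congr rfl fun l _ => ?_
    rw [hE, hA]
    have e1 : ξ ^ (2*α+1) * ξ * (ξ^2)^j * (ξ^2)^l
        = ξ ^ (2*α + 2 + 2*(j:ℝ) + 2*(l:ℝ)) := by
      calc ξ ^ (2*α+1) * ξ * (ξ^2)^j * (ξ^2)^l
          = ξ ^ (2*α+1) * ξ ^ (1:ℝ) * ξ ^ (((2*j : ℕ)):ℝ) * ξ ^ (((2*l : ℕ)):ℝ) := by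
            rw [Real.rpow_one, ← pow_mul, ← pow_mul, Real.rpow_natCast, Real.rpow_natCast]
        _ = ξ ^ (2*α + 1 + 1 + ((2*j : ℕ):ℝ) + ((2*l : ℕ):ℝ)) := by
            rw [← Real.rpow_add hξ0, ← Real.rpow_add hξ0, ← Real.rpow_add hξ0]
        _ = ξ ^ (2*α + 2 + 2*(j:ℝ) + 2*(l:ℝ)) := by
            congr 1; push_cast; ring
    rw [← e1, mul_pow, mul_pow, pow_add]
    ring
  rw [setIntegral_congr_fun measurableSet_Ioi key]
  have hint : ∀ (q : ℝ), -1 < q → IntegrableOn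
      (fun ξ : ℝ => ξ ^ q * Real.exp (-b * ξ ^ (2:ℝ))) (Set.Ioi 0) := by
    intro q hq
    refine (integrableOn_rpow_mul_exp_neg_mul_sq hb hq).congr_fun (fun x _ => ?_)
      measurableSet_Ioi
    rw [Real.rpow_two]
  have hq : ∀ j l : ℕ, (-1:ℝ) < 2*α + 2 + 2*(j:ℝ) + 2*(l:ℝ) := by
    intro j l
    have h1 : (0:ℝ) ≤ (j:ℝ) := Nat.cast_nonneg j
    have h2 : (0:ℝ) ≤ (l:ℝ) := Nat.cast_nonneg l
    linarith
  rw [MeasureTheory.integral_finset_sum]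
  · rw [Finset.mul_sum]
    refine Finset.sum_congr rfl fun j _ => ?_
    rw [MeasureTheory.integral_finset_sum]
    · rw [Finset.mul_sum]
      refine Finset.sum_congr rfl fun l _ => ?_
      rw [MeasureTheory.integral_const_mul]
      have hval : ∫ ξ in Set.Ioi (0:ℝ),
          ξ ^ (2*α + 2 + 2*(j:ℝ) + 2*(l:ℝ)) * Real.exp (-b * ξ ^ (2:ℝ)) =
          b ^ (-(2*α + 2 + 2*(j:ℝ) + 2*(l:ℝ) + 1)/2) * (1/2) *
            Real.Gamma ((2*α + 2 + 2*(j:ℝ) + 2*(l:ℝ) + 1)/2) := by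
        exact integral_rpow_mul_exp_neg_mul_rpow two_pos (hq j l) hb
      rw [hval]
      have hΓarg : Real.Gamma ((2*α + 2 + 2*(j:ℝ) + 2*(l:ℝ) + 1)/2)
          = Real.Gamma (α + 3/2 + j + l) := by congr 1; ring
      rw [hΓarg, hN2, hc]
      -- combine the powers of b
      have hpow : b ^ (α + 1) * (b:ℝ) ^ (j + l) *
          b ^ (-(2*α + 2 + 2*(j:ℝ) + 2*(l:ℝ) + 1)/2) = b ^ (-(1/2) : ℝ) := by
        rw [← Real.rpow_natCast b (j + l), ← Real.rpow_add hb, ← Real.rpow_add hb]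
        congr 1; push_cast; ring
      calc 2 * b ^ (α + 1) * ↑n.factorial / Real.Gamma (↑n + α + 1) *
            ((ascPochhammer ℝ j).eval (-(n:ℝ)) /
              ((ascPochhammer ℝ j).eval (α + 1) * ↑(Nat.factorial j))) *
            ((ascPochhammer ℝ l).eval (-(n:ℝ)) /
              ((ascPochhammer ℝ l).eval (α + 1) * ↑(Nat.factorial l))) *
            b ^ (j + l) *
            (b ^ (-(2*α + 2 + 2*(j:ℝ) + 2*(l:ℝ) + 1)/2) * (1/2) *
              Real.Gamma (α + 3/2 + j + l))
          = (b ^ (α + 1) * b ^ (j + l) *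
              b ^ (-(2*α + 2 + 2*(j:ℝ) + 2*(l:ℝ) + 1)/2)) *
            (↑n.factorial / Real.Gamma (↑n + α + 1) *
              ((ascPochhammer ℝ j).eval (-(n:ℝ)) * (ascPochhammer ℝ l).eval (-(n:ℝ)) /
                ((ascPochhammer ℝ j).eval (α + 1) * (ascPochhammer ℝ l).eval (α + 1)) *
                Real.Gamma (α + 3/2 + j + l) / (↑(Nat.factorial j) * ↑(Nat.factorial l)))) := by
            ring
        _ = _ := by rw [hpow]; ring
    · intro l _
      exact ((hint _ (hq j l)).const_mul _)
  · intro j _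
    apply MeasureTheory.integrable_finset_sum
    intro l _
    exact ((hint _ (hq j l)).const_mul _)
end

section
/- Let k > 0, ω > 0, E ∈ ℝ, σ ∈ {1, −1}, and let α, β, γ be real numbers with α + β + γ = −1. Suppose ψ : (0,∞) → ℝ is twice differentiable and satisfies, for all p > 0, the equation p·ψ″(p) + ψ′(p) + (α(α+β+1)/p)·ψ(p) + (3/(2k))·(E − V(p))·ψ(p) = 0, where V(p) = (3ω²/(2k))·p − σ·√p. Define φ : (0,∞) → ℝ by φ(ξ) = √ξ · ψ((k/24)ξ²). Then φ is twice differentiable and satisfies, for all ξ > 0, the equation −φ″(ξ) + [ω²(ξ − σξ₀)²/64 + (ε − 1/4)/ξ² − k/(24ω²)]·φ(ξ) = (E/4)·φ(ξ), where ξ₀ = (4/ω²)·√(k/6) and ε = −4α(α+β+1). -/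
open Real

/-- Change of variables `φ(ξ) = √ξ·ψ((k/24)ξ²)` transforming the
momentum-space Schrödinger equation
`p·ψ″ + ψ′ + (α(α+β+1)/p)·ψ + (3/(2k))·(E − V(p))·ψ = 0` with
`V(p) = (3ω²/(2k))·p − σ·√p` into the effective displaced isotonic oscillator
`−φ″ + [ω²(ξ − σξ₀)²/64 + (ε − 1/4)/ξ² − k/(24ω²)]·φ = (E/4)·φ` on `ξ > 0`, where
`ξ₀ = (4/ω²)·√(k/6)` and `ε = −4α(α+β+1)`. -/
theorem stmt_11 (k ω E : ℝ) (hk : 0 < k) (hω : 0 < ω)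
    (σ : ℝ) (hσ : σ = 1 ∨ σ = -1)
    (α β γ : ℝ) (habc : α + β + γ = -1)
    (V : ℝ → ℝ) (hV : ∀ p : ℝ, V p = 3 * ω ^ 2 / (2 * k) * p - σ * Real.sqrt p)
    (ψ : ℝ → ℝ)
    (hψdiff : ∀ p : ℝ, 0 < p → DifferentiableAt ℝ ψ p ∧ DifferentiableAt ℝ (deriv ψ) p)
    (hψeq : ∀ p : ℝ, 0 < p →
      p * deriv (deriv ψ) p + deriv ψ p + α * (α + β + 1) / p * ψ p +
        3 / (2 * k) * (E - V p) * ψ p = 0)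
    (φ : ℝ → ℝ) (hφ : ∀ ξ : ℝ, φ ξ = Real.sqrt ξ * ψ (k / 24 * ξ ^ 2))
    (ξ₀ ε : ℝ) (hξ₀ : ξ₀ = 4 / ω ^ 2 * Real.sqrt (k / 6))
    (hε : ε = -4 * α * (α + β + 1)) :
    (∀ ξ : ℝ, 0 < ξ → DifferentiableAt ℝ φ ξ ∧ DifferentiableAt ℝ (deriv φ) ξ) ∧
      ∀ ξ : ℝ, 0 < ξ →
        -deriv (deriv φ) ξ +
            (ω ^ 2 * (ξ - σ * ξ₀) ^ 2 / 64 + (ε - 1 / 4) / ξ ^ 2 -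
              k / (24 * ω ^ 2)) * φ ξ =
          E / 4 * φ ξ := by
  have hφfun : φ = fun ξ => Real.sqrt ξ * ψ (k / 24 * ξ ^ 2) := funext hφ
  have hq : ∀ ξ : ℝ, HasDerivAt (fun ξ : ℝ => k / 24 * ξ ^ 2) (k / 12 * ξ) ξ := by
    intro ξ
    have h := (hasDerivAt_pow 2 ξ).const_mul (k / 24)
    refine h.congr_deriv ?_
    push_cast; ring
  have key1 : ∀ ξ : ℝ, 0 < ξ → HasDerivAt φ
      (1 / (2 * Real.sqrt ξ) * ψ (k / 24 * ξ ^ 2) +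
        Real.sqrt ξ * (deriv ψ (k / 24 * ξ ^ 2) * (k / 12 * ξ))) ξ := by
    intro ξ hξ
    have hp : 0 < k / 24 * ξ ^ 2 := by positivity
    have h1 := Real.hasDerivAt_sqrt hξ.ne'
    have h2 : HasDerivAt (fun ξ : ℝ => ψ (k / 24 * ξ ^ 2))
        (deriv ψ (k / 24 * ξ ^ 2) * (k / 12 * ξ)) ξ :=
      ((hψdiff _ hp).1.hasDerivAt).comp ξ (hq ξ)
    rw [hφfun]
    exact h1.mul h2
  have hd1 : ∀ ξ ∈ Set.Ioi (0:ℝ), deriv φ ξ =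
      1 / (2 * Real.sqrt ξ) * ψ (k / 24 * ξ ^ 2) +
        Real.sqrt ξ * (deriv ψ (k / 24 * ξ ^ 2) * (k / 12 * ξ)) := fun ξ hξ =>
    (key1 ξ hξ).deriv
  have key2 : ∀ ξ : ℝ, 0 < ξ → HasDerivAt (deriv φ)
      (-(ψ (k / 24 * ξ ^ 2)) / (4 * Real.sqrt ξ ^ 3) +
        deriv ψ (k / 24 * ξ ^ 2) * (k / 12 * ξ) / Real.sqrt ξ +
        Real.sqrt ξ * (deriv (deriv ψ) (k / 24 * ξ ^ 2) * (k / 12 * ξ) ^ 2 +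
          deriv ψ (k / 24 * ξ ^ 2) * (k / 12))) ξ := by
    intro ξ hξ
    have hp : 0 < k / 24 * ξ ^ 2 := by positivity
    have hs : 0 < Real.sqrt ξ := Real.sqrt_pos.2 hξ
    have h1 := Real.hasDerivAt_sqrt hξ.ne'
    have hcomp1 : HasDerivAt (fun ξ : ℝ => ψ (k / 24 * ξ ^ 2))
        (deriv ψ (k / 24 * ξ ^ 2) * (k / 12 * ξ)) ξ :=
      ((hψdiff _ hp).1.hasDerivAt).comp ξ (hq ξ)
    have hcomp2 : HasDerivAt (fun ξ : ℝ => deriv ψ (k / 24 * ξ ^ 2))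
        (deriv (deriv ψ) (k / 24 * ξ ^ 2) * (k / 12 * ξ)) ξ :=
      by have := ((hψdiff _ hp).2.hasDerivAt).comp ξ (hq ξ); exact this
    have hlin : HasDerivAt (fun ξ : ℝ => k / 12 * ξ) (k / 12) ξ := by
      simpa using (hasDerivAt_id ξ).const_mul (k / 12)
    have hinv : HasDerivAt (fun ξ : ℝ => 1 / (2 * Real.sqrt ξ))
        (-(2 * (1 / (2 * Real.sqrt ξ))) / (2 * Real.sqrt ξ) ^ 2) ξ := by
      have h2 := (h1.const_mul 2).inv (by positivity)
      rw [show (fun ξ : ℝ => 1 / (2 * Real.sqrt ξ)) = (fun y => 2 * Real.sqrt y)⁻¹ from by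
        funext x; simp [one_div]]
      exact h2
    have hG := (hinv.mul hcomp1).add (h1.mul (hcomp2.mul hlin))
    have heq : deriv φ =ᶠ[nhds ξ] fun ξ =>
        1 / (2 * Real.sqrt ξ) * ψ (k / 24 * ξ ^ 2) +
          Real.sqrt ξ * (deriv ψ (k / 24 * ξ ^ 2) * (k / 12 * ξ)) :=
      Filter.eventuallyEq_of_mem (Ioi_mem_nhds hξ) hd1
    have hG' := hG.congr_of_eventuallyEq heq
    refine hG'.congr_deriv ?_
    simp only [Pi.mul_apply]
    field_simp
    ring
  refine ⟨fun ξ hξ => ⟨(key1 ξ hξ).differentiableAt, (key2 ξ hξ).differentiableAt⟩, ?_⟩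
  intro ξ hξ
  have hd2 := (key2 ξ hξ).deriv
  have hp : 0 < k / 24 * ξ ^ 2 := by positivity
  have hode := hψeq _ hp
  rw [hV] at hode
  obtain ⟨t, ht, hkt⟩ : ∃ t : ℝ, 0 < t ∧ k = 24 * t ^ 2 :=
    ⟨Real.sqrt (k / 24), Real.sqrt_pos.2 (by positivity), by
      rw [Real.sq_sqrt (by positivity : (0:ℝ) ≤ k / 24)]; ring⟩
  obtain ⟨s, hs, hξs⟩ : ∃ s : ℝ, 0 < s ∧ ξ = s ^ 2 :=
    ⟨Real.sqrt ξ, Real.sqrt_pos.2 hξ, (Real.sq_sqrt hξ.le).symm⟩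
  subst hkt hξs
  have hsq : Real.sqrt (s ^ 2) = s := Real.sqrt_sq hs.le
  have hsp : Real.sqrt (24 * t ^ 2 / 24 * (s ^ 2) ^ 2) = t * s ^ 2 := by
    rw [show 24 * t ^ 2 / 24 * (s ^ 2) ^ 2 = (t * s ^ 2) ^ 2 by ring,
      Real.sqrt_sq (by positivity)]
  have h6 : Real.sqrt (24 * t ^ 2 / 6) = 2 * t := by
    rw [show 24 * t ^ 2 / 6 = (2 * t) ^ 2 by ring, Real.sqrt_sq (by positivity)]
  rw [hsp] at hode
  rw [hd2, hφ, hξ₀, hε, h6, hsq]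
  have hsne : s ≠ 0 := hs.ne'
  have htne : t ≠ 0 := ht.ne'
  have hωne : ω ≠ 0 := hω.ne'
  rw [show (24 * t ^ 2 / 24 * (s ^ 2) ^ 2 : ℝ) = t ^ 2 * s ^ 4 from by ring] at hode ⊢
  clear hd2 key2 key1 hd1 hq hφfun hφ hψeq hψdiff hV hp hξ hsq hsp h6
  generalize ψ (t ^ 2 * s ^ 4) = P at hode ⊢
  generalize deriv ψ (t ^ 2 * s ^ 4) = P1 at hode ⊢
  generalize deriv (deriv ψ) (t ^ 2 * s ^ 4) = P2 at hode ⊢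
  have hode2 : 16 * t ^ 2 * s ^ 4 * (t ^ 2 * s ^ 4 * P2 + P1) +
      16 * (α * (α + β + 1)) * P + s ^ 4 * (E - ω ^ 2 * s ^ 4 / 16 + σ * t * s ^ 2) * P = 0 := by
    have h144 : (144 * t ^ 4 : ℝ) ≠ 0 := by positivity
    apply mul_left_cancel₀ h144
    rw [mul_zero]
    field_simp at hode
    linear_combination t ^ 4 * hode
  rcases hσ with rfl | rfl
  · field_simp
    linear_combination (-9216 * ω ^ 2) * hode2
  · field_simp
    linear_combination (-9216 * ω ^ 2) * hode2
end

section
/- Let k > 0, ω > 0, σ ∈ {1, −1}, n ∈ ℕ, and set ξ₀ = (4/ω²)·√(k/6). Define φ : ℝ → ℝ by φ(ξ) = exp(−ω(ξ − σξ₀)²/16) · He_n(√(ω/4)·(ξ − σξ₀)), where He_n is the n-th probabilists' Hermite polynomial. Then: (i) for all ξ ∈ ℝ, −φ″(ξ) + (ω²(ξ − σξ₀)²/64 − k/(24ω²))·φ(ξ) = (E/4)·φ(ξ) with E = ω(n + 1/2) − k/(6ω²); and (ii) φ satisfies the Dirichlet boundary condition φ(0) = 0 if and only if He_n(√(ω/4)·ξ₀)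 = 0. -/
open Real Polynomial

lemma derivHermite : ∀ n : ℕ, derivative (hermite (n+1)) = ((n:ℤ)+1) • hermite n := by
  intro n
  induction n with
  | zero => simp [hermite_one, hermite_zero]
  | succ m ih =>
    rw [hermite_succ (m+1), derivative_sub, derivative_mul, derivative_X, ih,
      derivative_smul, hermite_succ m]
    push_cast
    simp only [mul_smul_comm, one_mul]
    module

lemma hermiteODE (n : ℕ) : derivative (derivative (hermite n)) =
    X * derivative (hermite n) - (n : ℤ) • hermite n := by
  cases n with
  | zero => simp [hermite_zero]
  | succ m =>
    rw [derivHermite m, derivative_smul]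
    rw [show hermite (m+1) = X * hermite m - derivative (hermite m) from hermite_succ m]
    push_cast
    simp only [mul_smul_comm]
    module

lemma hermiteCompNeg : ∀ n : ℕ, (hermite n).comp (-X) = ((-1:ℤ)^n) • hermite n := by
  intro n
  induction n with
  | zero => simp [hermite_zero]
  | succ m ih =>
    have hd : (derivative (hermite m)).comp (-X) = -((-1:ℤ)^m • derivative (hermite m)) := by
      have h1 : derivative ((hermite m).comp (-X)) =
          derivative (-X) * (derivative (hermite m)).comp (-X) := derivative_comp _ _
      rw [ih, derivative_smul] at h1
      simp only [derivative_neg, derivative_X, neg_mul, one_mul] at h1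
      linear_combination (norm := module) h1
    rw [hermite_succ, sub_comp, mul_comp, X_comp, ih, hd, pow_succ]
    simp only [mul_smul_comm, neg_mul, mul_neg, mul_one, neg_smul, smul_neg]
    module

lemma hermiteAevalNeg (n : ℕ) (x : ℝ) :
    aeval (-x) (hermite n) = (-1:ℝ)^n * aeval x (hermite n) := by
  have h := congrArg (aeval x) (hermiteCompNeg n)
  rw [aeval_comp] at h
  simp only [map_neg, aeval_X, zsmul_eq_mul, map_mul, map_pow, map_intCast] at h
  simpa using h

lemma keyDeriv (ω b c : ℝ) (hb2 : b^2 = ω/4) (R : Polynomial ℤ) (ξ : ℝ) :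
    HasDerivAt (fun t => Real.exp (-ω * (t - c) ^ 2 / 16) * (aeval (b * (t - c)) R : ℝ))
      (b * (Real.exp (-ω * (ξ - c) ^ 2 / 16) * aeval (b * (ξ - c)) (derivative R))
        - b / 2 * (Real.exp (-ω * (ξ - c) ^ 2 / 16) * aeval (b * (ξ - c)) (X * R))) ξ := by
  have h1 : HasDerivAt (fun t : ℝ => -ω * (t - c) ^ 2 / 16)
      (-ω * (2 * (ξ - c) ^ 1 * 1) / 16) ξ :=
    ((((hasDerivAt_id ξ).sub_const c).pow 2).const_mul (-ω)).div_const 16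
  have h2 := h1.exp
  have hi : HasDerivAt (fun t : ℝ => b * (t - c)) b ξ := by
    simpa using ((hasDerivAt_id ξ).sub_const c).const_mul b
  have h3 : HasDerivAt (fun t : ℝ => (aeval (b * (t - c)) R : ℝ))
      ((aeval (b * (ξ - c)) (derivative R)) * b) ξ :=
    by have := (R.hasDerivAt_aeval (𝕜 := ℝ) (b * (ξ - c))).comp ξ hi; exact this
  have : HasDerivAt (fun t => Real.exp (-ω * (t - c) ^ 2 / 16) * (aeval (b * (t - c)) R : ℝ)) _ ξ :=
    h2.mul h3
  convert this using 1
  simp only [map_mul, aeval_X]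
  ring_nf
  rw [hb2]
  ring


/-- For `k > 0`, `ω > 0`, `σ = ±1`, `n ∈ ℕ`, `ξ₀ = (4/ω²)·√(k/6)`, the
function `φ(ξ) = exp(−ω(ξ − σξ₀)²/16)·He_n(√(ω/4)·(ξ − σξ₀))` (with `He_n` the
probabilists' Hermite polynomial) satisfies (i) for all `ξ`,
`−φ″ + (ω²(ξ − σξ₀)²/64 − k/(24ω²))·φ = (E/4)·φ` with `E = ω(n + 1/2) − k/(6ω²)`, and
(ii) the Dirichlet condition `φ(0) = 0` holds iff `He_n(√(ω/4)·ξ₀) = 0`. -/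
theorem stmt_12 (k ω : ℝ) (hk : 0 < k) (hω : 0 < ω)
    (σ : ℝ) (hσ : σ = 1 ∨ σ = -1) (n : ℕ)
    (ξ₀ : ℝ) (hξ₀ : ξ₀ = 4 / ω ^ 2 * Real.sqrt (k / 6))
    (φ : ℝ → ℝ)
    (hφ : ∀ ξ : ℝ, φ ξ = Real.exp (-ω * (ξ - σ * ξ₀) ^ 2 / 16) *
      aeval (Real.sqrt (ω / 4) * (ξ - σ * ξ₀)) (hermite n))
    (E : ℝ) (hE : E = ω * (n + 1 / 2) - k / (6 * ω ^ 2)) :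
    (∀ ξ : ℝ,
        -deriv (deriv φ) ξ +
            (ω ^ 2 * (ξ - σ * ξ₀) ^ 2 / 64 - k / (24 * ω ^ 2)) * φ ξ =
          E / 4 * φ ξ) ∧
      (φ 0 = 0 ↔ aeval (Real.sqrt (ω / 4) * ξ₀) (hermite n) = (0 : ℝ)) := by
  set b : ℝ := Real.sqrt (ω / 4) with hb
  set c : ℝ := σ * ξ₀ with hc
  have hb2 : b ^ 2 = ω / 4 := Real.sq_sqrt (by positivity)
  have hφe : φ = fun t => Real.exp (-ω * (t - c) ^ 2 / 16) *
      (aeval (b * (t - c)) (hermite n) : ℝ) := funext hφ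
  subst hφe
  set Q := hermite n with hQ
  -- first derivative
  have hd1 : deriv (fun t => Real.exp (-ω * (t - c) ^ 2 / 16) * (aeval (b * (t - c)) Q : ℝ))
      = fun ξ => b * (Real.exp (-ω * (ξ - c) ^ 2 / 16) * aeval (b * (ξ - c)) (derivative Q))
        - b / 2 * (Real.exp (-ω * (ξ - c) ^ 2 / 16) * aeval (b * (ξ - c)) (X * Q)) :=
    funext fun ξ => (keyDeriv ω b c hb2 Q ξ).deriv
  constructor
  · intro ξ
    have hd2 : deriv (deriv (fun t => Real.exp (-ω * (t - c) ^ 2 / 16) *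
        (aeval (b * (t - c)) Q : ℝ))) ξ
        = b * (b * (Real.exp (-ω * (ξ - c) ^ 2 / 16) *
              aeval (b * (ξ - c)) (derivative (derivative Q)))
            - b / 2 * (Real.exp (-ω * (ξ - c) ^ 2 / 16) *
              aeval (b * (ξ - c)) (X * derivative Q)))
          - b / 2 * (b * (Real.exp (-ω * (ξ - c) ^ 2 / 16) *
              aeval (b * (ξ - c)) (derivative (X * Q)))
            - b / 2 * (Real.exp (-ω * (ξ - c) ^ 2 / 16) *
              aeval (b * (ξ - c)) (X * (X * Q)))) := by
      rw [hd1]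
      exact (((keyDeriv ω b c hb2 (derivative Q) ξ).const_mul b).sub
        ((keyDeriv ω b c hb2 (X * Q) ξ).const_mul (b / 2))).deriv
    have hODE : (aeval (b * (ξ - c)) (derivative (derivative Q)) : ℝ)
        = (b * (ξ - c)) * aeval (b * (ξ - c)) (derivative Q)
          - n * aeval (b * (ξ - c)) Q := by
      rw [hQ, hermiteODE n]
      simp [zsmul_eq_mul]
    have hder : derivative (X * Q) = Q + X * derivative Q := by
      rw [derivative_mul, derivative_X, one_mul]
    rw [hd2, hODE, hder]
    simp only [map_mul, map_add, aeval_X]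
    rw [hE]
    show -_ + (ω ^ 2 * (ξ - c) ^ 2 / 64 - k / (24 * ω ^ 2)) *
        (Real.exp (-ω * (ξ - c) ^ 2 / 16) * aeval (b * (ξ - c)) Q) = _ * _
    linear_combination (Real.exp (-ω * (ξ - c) ^ 2 / 16) * (aeval (b * (ξ - c)) Q : ℝ)
      * ((n : ℝ) + 1 / 2 - (ξ - c) ^ 2 / 4 * (b ^ 2 + ω / 4))) * hb2
  · have h0 : (fun t => Real.exp (-ω * (t - c) ^ 2 / 16) * (aeval (b * (t - c)) Q : ℝ)) 0
        = Real.exp (-ω * (0 - c) ^ 2 / 16) * aeval (b * (0 - c)) Q := rfl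
    rw [h0, mul_eq_zero]
    have hexp : Real.exp (-ω * (0 - c) ^ 2 / 16) ≠ 0 := Real.exp_ne_zero _
    constructor
    · rintro (h | h)
      · exact absurd h hexp
      · rcases hσ with h1 | h1
        · rw [hc, h1, one_mul] at h
          have : b * (0 - ξ₀) = -(b * ξ₀) := by ring
          rw [this, hermiteAevalNeg] at h
          rcases mul_eq_zero.1 h with h' | h'
          · exact absurd h' (pow_ne_zero n (by norm_num))
          · exact h'
        · rw [hc, h1] at h
          convert h using 2
          ring
    · intro h
      right
      rcases hσ with h1 | h1
      · rw [hc, h1, one_mul]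
        have : b * (0 - ξ₀) = -(b * ξ₀) := by ring
        rw [this, hermiteAevalNeg, h, mul_zero]
      · rw [hc, h1]
        convert h using 2
        ring
end

section
/- Let ℓ ∈ ℝ with ℓ ∉ {0, −1, −1/2}, and let f, g : ℝ → ℝ be differentiable functions such that f is nowhere zero and the Chiellini identity g′(y)f(y) − g(y)f′(y) + ℓ(ℓ+1)f(y)³ = 0 holds for all y ∈ ℝ. Let x : ℝ → ℝ be twice differentiable and define u(t) = ẋ(t) − g(x(t))/(ℓ·f(x(t))); assume u(t) > 0 for all t. Then for all t, d/dt[(ℓ/(ℓ+1))·u(t)^{(ℓ+1)/ℓ}] − ℓ·f(x(t))·u(t)^{(ℓ+1)/ℓ} = u(t)^{1/ℓ}·(ẍ(t) + f(x(t))·ẋ(t) + g(x(t))). Consequently, the Euler–Lagrange equation of the Lagrangian L(x, v) = (ℓ²/((ℓ+1)(2ℓ+1)))·(v − g(x)/(ℓf(x)))^{(2ℓ+1)/ℓ} holds along x if and only if x solves the Liénard equation ẍ + f(x)ẋ + g(x) = 0. -/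
open Real

/-- Let `ℓ ∉ {0, −1, −1/2}` and let `f, g` be differentiable with `f`
nowhere zero, satisfying the Chiellini identity `g′f − gf′ + ℓ(ℓ+1)f³ = 0` on `ℝ`.
For twice differentiable `x : ℝ → ℝ` with `u(t) = ẋ(t) − g(x(t))/(ℓf(x(t))) > 0`,
one has
`d/dt[(ℓ/(ℓ+1))·u^{(ℓ+1)/ℓ}] − ℓ·f(x)·u^{(ℓ+1)/ℓ} = u^{1/ℓ}·(ẍ + f(x)ẋ + g(x))`;
consequently the Euler–Lagrange equation
`d/dt[(ℓ/(ℓ+1))·u^{(ℓ+1)/ℓ}] = ℓ·f(x)·u^{(ℓ+1)/ℓ}` of the Lagrangian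
`L(x,v) = (ℓ²/((ℓ+1)(2ℓ+1)))·(v − g(x)/(ℓf(x)))^{(2ℓ+1)/ℓ}` holds along `x` iff `x`
solves the Liénard equation `ẍ + f(x)ẋ + g(x) = 0`. -/
theorem stmt_15 (ℓ : ℝ) (hℓ : ℓ ≠ 0 ∧ ℓ ≠ -1 ∧ ℓ ≠ -1 / 2)
    (f g : ℝ → ℝ) (hf : Differentiable ℝ f) (hg : Differentiable ℝ g)
    (hfne : ∀ y : ℝ, f y ≠ 0)
    (hCh : ∀ y : ℝ,
      deriv g y * f y - g y * deriv f y + ℓ * (ℓ + 1) * (f y) ^ 3 = 0)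
    (x : ℝ → ℝ)
    (hx : ∀ t : ℝ, DifferentiableAt ℝ x t ∧ DifferentiableAt ℝ (deriv x) t)
    (u : ℝ → ℝ) (hu : ∀ t : ℝ, u t = deriv x t - g (x t) / (ℓ * f (x t)))
    (hupos : ∀ t : ℝ, 0 < u t) :
    (∀ t : ℝ,
        deriv (fun s => ℓ / (ℓ + 1) * u s ^ ((ℓ + 1) / ℓ)) t -
            ℓ * f (x t) * u t ^ ((ℓ + 1) / ℓ) =
          u t ^ (1 / ℓ) *
            (deriv (deriv x) t + f (x t) * deriv x t + g (x t))) ∧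
      ((∀ t : ℝ,
          deriv (fun s => ℓ / (ℓ + 1) * u s ^ ((ℓ + 1) / ℓ)) t =
            ℓ * f (x t) * u t ^ ((ℓ + 1) / ℓ)) ↔
        ∀ t : ℝ, deriv (deriv x) t + f (x t) * deriv x t + g (x t) = 0) := by

  obtain ⟨hℓ0, hℓ1, hℓ2⟩ := hℓ
  have hℓ1' : ℓ + 1 ≠ 0 := fun h => hℓ1 (by linarith)
  have hden : ∀ y, ℓ * f y ≠ 0 := fun y => mul_ne_zero hℓ0 (hfne y)
  -- derivative of y ↦ g y / (ℓ * f y)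
  have hhd : ∀ y : ℝ, HasDerivAt (fun z => g z / (ℓ * f z)) (-(ℓ + 1) * f y) y := by
    intro y
    have h1 : HasDerivAt (fun z => ℓ * f z) (ℓ * deriv f y) y :=
      (hf y).hasDerivAt.const_mul ℓ
    have h2 : HasDerivAt (fun z => g z / (ℓ * f z))
        ((deriv g y * (ℓ * f y) - g y * (ℓ * deriv f y)) / (ℓ * f y) ^ 2) y :=
      (hg y).hasDerivAt.div h1 (hden y)
    convert h2 using 1
    have hC := hCh y
    rw [eq_div_iff (pow_ne_zero 2 (hden y))]
    linear_combination (-ℓ) * hC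
  -- derivative of u
  have hud : ∀ t, HasDerivAt u
      (deriv (deriv x) t + (ℓ + 1) * f (x t) * deriv x t) t := by
    intro t
    have h1 : HasDerivAt (deriv x) (deriv (deriv x) t) t := (hx t).2.hasDerivAt
    have h2 : HasDerivAt (fun s => g (x s) / (ℓ * f (x s)))
        (-(ℓ + 1) * f (x t) * deriv x t) t := by
      have := (hhd (x t)).comp t (hx t).1.hasDerivAt
      simpa [Function.comp_def, mul_assoc] using this
    have h3 : HasDerivAt (fun s => deriv x s - g (x s) / (ℓ * f (x s)))
        (deriv (deriv x) t - -(ℓ + 1) * f (x t) * deriv x t) t := h1.sub h2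
    have hu' : u = fun s => deriv x s - g (x s) / (ℓ * f (x s)) :=
      funext fun s => hu s
    rw [hu']
    convert h3 using 1
    ring
  have hune : ∀ t, u t ≠ 0 := fun t => ne_of_gt (hupos t)
  have key : ∀ t, deriv (fun s => ℓ / (ℓ + 1) * u s ^ ((ℓ + 1) / ℓ)) t
      = u t ^ (1 / ℓ) * (deriv (deriv x) t + (ℓ + 1) * f (x t) * deriv x t) := by
    intro t
    have h1 := (hud t).rpow_const (p := (ℓ + 1) / ℓ) (Or.inl (hune t))
    have h2 := h1.const_mul (ℓ / (ℓ + 1))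
    rw [h2.deriv]
    have hp : (ℓ + 1) / ℓ - 1 = 1 / ℓ := by field_simp; ring
    rw [hp]
    field_simp
  have hrw : ∀ t, u t ^ ((ℓ + 1) / ℓ) = u t ^ (1 / ℓ) * u t := by
    intro t
    have hp : (ℓ + 1) / ℓ = 1 / ℓ + 1 := by field_simp; ring
    rw [hp, Real.rpow_add (hupos t), Real.rpow_one]
  have main : ∀ t : ℝ,
      deriv (fun s => ℓ / (ℓ + 1) * u s ^ ((ℓ + 1) / ℓ)) t -
          ℓ * f (x t) * u t ^ ((ℓ + 1) / ℓ) =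
        u t ^ (1 / ℓ) * (deriv (deriv x) t + f (x t) * deriv x t + g (x t)) := by
    intro t
    rw [key t, hrw t]
    rw [hu t]
    field_simp [hden (x t)]
    ring_nf
    simp [hfne (x t)]
  refine ⟨main, ?_, ?_⟩
  · intro hEL t
    have h1 := main t
    rw [hEL t, sub_self] at h1
    have h2 : u t ^ (1 / ℓ) ≠ 0 := ne_of_gt (Real.rpow_pos_of_pos (hupos t) _)
    have := (mul_eq_zero.1 h1.symm).resolve_left h2
    linarith [this]
  · intro hL t
    have h1 := main t
    rw [hL t, mul_zero] at h1
    linarith [h1]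
end

section
/- Let ℓ ∈ ℝ with ℓ ∉ {0, −1, −1/2}, let u > 0 and A ∈ ℝ, and set v = u + A, L = (ℓ²/((ℓ+1)(2ℓ+1)))·u^{(2ℓ+1)/ℓ}, and p = (ℓ/(ℓ+1))·u^{(ℓ+1)/ℓ}. Then ((ℓ+1)/ℓ)·p = u^{(ℓ+1)/ℓ} > 0, (((ℓ+1)/ℓ)·p)^{(2ℓ+1)/(ℓ+1)} = u^{(2ℓ+1)/ℓ}, and the Legendre transform satisfies p·v − L = A·p + (ℓ/(2ℓ+1))·(((ℓ+1)/ℓ)·p)^{(2ℓ+1)/(ℓ+1)}. -/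
open Real

/-- The Legendre-transform computation of the branched Hamiltonian:
for `ℓ ∉ {0, −1, −1/2}`, `u > 0`, `A ∈ ℝ`, with `v = u + A`,
`L = (ℓ²/((ℓ+1)(2ℓ+1)))·u^{(2ℓ+1)/ℓ}` and `p = (ℓ/(ℓ+1))·u^{(ℓ+1)/ℓ}`, one has
`((ℓ+1)/ℓ)·p = u^{(ℓ+1)/ℓ} > 0`, `(((ℓ+1)/ℓ)·p)^{(2ℓ+1)/(ℓ+1)} = u^{(2ℓ+1)/ℓ}`, and
`p·v − L = A·p + (ℓ/(2ℓ+1))·(((ℓ+1)/ℓ)·p)^{(2ℓ+1)/(ℓ+1)}`. -/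
theorem stmt_16 (ℓ : ℝ) (hℓ : ℓ ≠ 0 ∧ ℓ ≠ -1 ∧ ℓ ≠ -1 / 2)
    (u A : ℝ) (hu : 0 < u)
    (v L p : ℝ) (hv : v = u + A)
    (hL : L = ℓ ^ 2 / ((ℓ + 1) * (2 * ℓ + 1)) * u ^ ((2 * ℓ + 1) / ℓ))
    (hp : p = ℓ / (ℓ + 1) * u ^ ((ℓ + 1) / ℓ)) :
    (ℓ + 1) / ℓ * p = u ^ ((ℓ + 1) / ℓ) ∧
      0 < (ℓ + 1) / ℓ * p ∧
      ((ℓ + 1) / ℓ * p) ^ ((2 * ℓ + 1) / (ℓ + 1)) = u ^ ((2 * ℓ + 1) / ℓ) ∧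
      p * v - L = A * p + ℓ / (2 * ℓ + 1) * ((ℓ + 1) / ℓ * p) ^ ((2 * ℓ + 1) / (ℓ + 1)) := by
  obtain ⟨h0, h1, h2⟩ := hℓ
  have h1' : ℓ + 1 ≠ 0 := by intro h; apply h1; linarith
  have h2' : 2 * ℓ + 1 ≠ 0 := by intro h; apply h2; linarith
  have key : (ℓ + 1) / ℓ * p = u ^ ((ℓ + 1) / ℓ) := by
    rw [hp]; field_simp
  have pos : (0:ℝ) < u ^ ((ℓ + 1) / ℓ) := rpow_pos_of_pos hu _
  have key2 : ((ℓ + 1) / ℓ * p) ^ ((2 * ℓ + 1) / (ℓ + 1)) = u ^ ((2 * ℓ + 1) / ℓ) := by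
    rw [key, ← rpow_mul hu.le]
    congr 1
    field_simp
  refine ⟨key, key ▸ pos, key2, ?_⟩
  rw [key2, hv, hL, hp]
  have huu : u ^ ((ℓ + 1) / ℓ) * u = u ^ ((2 * ℓ + 1) / ℓ) := by
    nth_rewrite 2 [show u = u ^ (1:ℝ) by rw [rpow_one]]
    rw [← rpow_add hu]
    congr 1
    field_simp; ring
  set a := u ^ ((ℓ + 1) / ℓ)
  set b := u ^ ((2 * ℓ + 1) / ℓ)
  have e : ℓ / (ℓ + 1) - ℓ ^ 2 / ((ℓ + 1) * (2 * ℓ + 1)) = ℓ / (2 * ℓ + 1) := by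
    rw [div_sub_div _ _ h1' (mul_ne_zero h1' h2'), div_eq_div_iff (mul_ne_zero h1' (mul_ne_zero h1' h2')) h2']
    ring
  linear_combination (ℓ / (ℓ + 1)) * huu + b * e
end

section
/- Let k ≠ 0, ω ∈ ℝ, x ∈ ℝ, and u ≠ 0 be real numbers, and set A = −3(ω²/k + kx²/9), v = u + A, L = 1/(2u), and p = −1/(2u²). Then p < 0, u = σ/√(−2p) where σ = 1 if u > 0 and σ = −1 if u < 0, and p·v − L = −3p·(kx²/9 + ω²/k) − σ·√(−2p). In particular, corresponding to the two branches σ = ±1 of the multivalued inverse of v ↦ p, the Legendre transform yields the pair of branched Hamiltonians H^∓ = −3p(kx²/9 + ω²/k) ∓ √(−2p) on p < 0. -/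
open Real

/-- The `ℓ = −1/3` Legendre transform for the modified Emden equation:
for `k ≠ 0`, `ω, x ∈ ℝ`, `u ≠ 0`, with `A = −3(ω²/k + kx²/9)`, `v = u + A`,
`L = 1/(2u)`, `p = −1/(2u²)` and `σ = 1` if `u > 0`, `σ = −1` if `u < 0`, one has
`p < 0`, `u = σ/√(−2p)`, and `p·v − L = −3p·(kx²/9 + ω²/k) − σ·√(−2p)`: the two
branches `σ = ±1` yield the branched Hamiltonians
`H^∓ = −3p(kx²/9 + ω²/k) ∓ √(−2p)` on `p < 0`. -/
theorem stmt_17 (k ω x u : ℝ) (hk : k ≠ 0) (hu : u ≠ 0)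
    (A v L p σ : ℝ)
    (hA : A = -3 * (ω ^ 2 / k + k * x ^ 2 / 9))
    (hv : v = u + A) (hL : L = 1 / (2 * u)) (hp : p = -1 / (2 * u ^ 2))
    (hσ : (0 < u → σ = 1) ∧ (u < 0 → σ = -1)) :
    p < 0 ∧
      u = σ / Real.sqrt (-2 * p) ∧
      p * v - L = -3 * p * (k * x ^ 2 / 9 + ω ^ 2 / k) - σ * Real.sqrt (-2 * p) := by
  obtain ⟨hσp, hσn⟩ := hσ
  have hu2 : (0:ℝ) < u ^ 2 := by positivity
  have hplt : p < 0 := by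
    rw [hp]; exact div_neg_of_neg_of_pos (by norm_num) (by positivity)
  have hs : Real.sqrt (-2 * p) = 1 / |u| := by
    have h1 : -2 * p = (1 / |u|) ^ 2 := by
      rw [div_pow, one_pow, sq_abs, hp]; field_simp
    rw [h1, Real.sqrt_sq (by positivity)]
  refine ⟨hplt, ?_, ?_⟩ <;> rcases hu.lt_or_gt with h | h
  · rw [hσn h, hs, abs_of_neg h]; field_simp
  · rw [hσp h, hs, abs_of_pos h]; field_simp
  · rw [hσn h, hs, abs_of_neg h, hv, hL, hp, hA]; field_simp; ring
  · rw [hσp h, hs, abs_of_pos h, hv, hL, hp, hA]; field_simp; ring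
end

section
/- Let α, β, γ be real numbers with α + β + γ = −1, let m : ℝ → ℝ be a twice continuously differentiable positive function, and let ψ : ℝ → ℝ be twice differentiable. Then for all p ∈ ℝ, −(1/4)·[ m(p)^α · (d/dp)( m^β · (d/dp)( m^γ · ψ ) )(p) + m(p)^γ · (d/dp)( m^β · (d/dp)( m^α · ψ ) )(p) ] = −(1/(2m(p)))·[ ψ″(p) − (m′(p)/m(p))·ψ′(p) + ((β+1)/2)·(2m′(p)²/m(p)² − m″(p)/m(p))·ψ(p) + α(α+β+1)·(m′(p)²/m(p)²)·ψ(p) ]. -/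
open Real

/-- The von Roos ordered kinetic operator in second-order form.
For ambiguity parameters `α + β + γ = −1`, a positive `C²` mass function `m` and a
twice differentiable wavefunction `ψ`, for all `p`:
`−(1/4)·[m^α·(m^β·(m^γ·ψ)′)′ + m^γ·(m^β·(m^α·ψ)′)′](p)
 = −(1/(2m))·[ψ″ − (m′/m)ψ′ + ((β+1)/2)(2m′²/m² − m″/m)ψ + α(α+β+1)(m′²/m²)ψ](p)`. -/
theorem stmt_18 (α β γ : ℝ) (habc : α + β + γ = -1)
    (m : ℝ → ℝ) (hm : ContDiff ℝ 2 m) (hmpos : ∀ p : ℝ, 0 < m p)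
    (ψ : ℝ → ℝ)
    (hψ : ∀ p : ℝ, DifferentiableAt ℝ ψ p ∧ DifferentiableAt ℝ (deriv ψ) p) :
    ∀ p : ℝ,
      -(1 / 4) *
          (m p ^ α *
              deriv (fun q => m q ^ β * deriv (fun r => m r ^ γ * ψ r) q) p +
            m p ^ γ *
              deriv (fun q => m q ^ β * deriv (fun r => m r ^ α * ψ r) q) p) =
        -(1 / (2 * m p)) *
          (deriv (deriv ψ) p - deriv m p / m p * deriv ψ p +
            (β + 1) / 2 *
              (2 * (deriv m p) ^ 2 / (m p) ^ 2 - deriv (deriv m) p / m p) * ψ p +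
            α * (α + β + 1) * ((deriv m p) ^ 2 / (m p) ^ 2) * ψ p) := by
  have hγ : γ = -1 - α - β := by linarith
  subst hγ
  intro p
  have hmd : Differentiable ℝ m := hm.differentiable (by norm_num)
  have hm1 : ContDiff ℝ 1 (deriv m) := by
    have h2 : ContDiff ℝ ((1 : ℕ) + 1) m := by exact_mod_cast hm
    exact (contDiff_succ_iff_deriv.mp h2).2.2
  have hmd' : Differentiable ℝ (deriv m) := hm1.differentiable one_ne_zero
  have hmp := hmpos p
  -- derivative of x ↦ m x ^ s
  have hpow : ∀ (s : ℝ) (q : ℝ),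
      HasDerivAt (fun x => m x ^ s) (deriv m q * s * m q ^ (s - 1)) q := fun s q =>
    ((hmd q).hasDerivAt).rpow_const (Or.inl (hmpos q).ne')
  -- first derivative of m^r * ψ, as a function
  have hFd : ∀ r : ℝ, deriv (fun x => m x ^ r * ψ x) =
      fun q => r * m q ^ (r - 1) * deriv m q * ψ q + m q ^ r * deriv ψ q := by
    intro r
    funext q
    have h : HasDerivAt (fun x => m x ^ r * ψ x) _ q := (hpow r q).mul ((hψ q).1.hasDerivAt)
    rw [h.deriv]
    ring
  -- second-level derivative
  have hKey : ∀ r : ℝ,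
      deriv (fun q => m q ^ β *
        (r * m q ^ (r - 1) * deriv m q * ψ q + m q ^ r * deriv ψ q)) p =
      β * m p ^ (β - 1) * deriv m p *
          (r * m p ^ (r - 1) * deriv m p * ψ p + m p ^ r * deriv ψ p) +
        m p ^ β *
          (r * (r - 1) * m p ^ (r - 1 - 1) * deriv m p ^ 2 * ψ p +
            r * m p ^ (r - 1) * deriv (deriv m) p * ψ p +
            2 * r * m p ^ (r - 1) * deriv m p * deriv ψ p +
            m p ^ r * deriv (deriv ψ) p) := by
    intro r
    have hA : HasDerivAt
        (fun q => r * m q ^ (r - 1) * deriv m q * ψ q + m q ^ r * deriv ψ q) _ p :=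
      ((((hasDerivAt_const p r).mul (hpow (r - 1) p)).mul ((hmd' p).hasDerivAt)).mul
          ((hψ p).1.hasDerivAt)).add ((hpow r p).mul ((hψ p).2.hasDerivAt))
    have hB : HasDerivAt (fun q => m q ^ β *
        (r * m q ^ (r - 1) * deriv m q * ψ q + m q ^ r * deriv ψ q)) _ p := (hpow β p).mul hA
    rw [hB.deriv]
    simp only [Pi.mul_apply]
    ring
  simp only [hFd]
  rw [hKey, hKey]
  have hsub : ∀ (y : ℝ), m p ^ (y - 1) = m p ^ y / m p := fun y =>
    Real.rpow_sub_one hmp.ne' y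
  simp only [hsub]
  have hC : m p ^ (-1 - α - β) = (m p)⁻¹ * (m p ^ α)⁻¹ * (m p ^ β)⁻¹ := by
    rw [show (-1 - α - β : ℝ) = (-1) + (-α) + (-β) by ring, Real.rpow_add hmp,
      Real.rpow_add hmp, Real.rpow_neg_one, Real.rpow_neg hmp.le,
      Real.rpow_neg hmp.le]
  simp only [hC]
  have ha0 : m p ^ α ≠ 0 := (Real.rpow_pos_of_pos hmp α).ne'
  have hb0 : m p ^ β ≠ 0 := (Real.rpow_pos_of_pos hmp β).ne'
  field_simp
  ring
end
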